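/- arXiv:2001.04728 — 8 statements merged into one kernel-verified Lean document; each statement's English description precedes it below -/
import Mathlib

section
/- Let D be a nontrivial 2-(v,k,λ) design, let G ≤ Aut(D) be flag-transitive, and let α be a point of D. Then |G_α|³ > λ|G|. -/
/-- The set `Bs` of blocks forms a `2`-`(v, k, lam)` design on the point set `P`:
there are `v` points, every block is a `k`-element subset of `P`, and any two
distinct points lie in exactly `lam` common blocks. -/
def IsTwoDesign (v k lam : ℕ) (P : Type*) (Bs : Set (Set P)) : Prop :=
  Nat.card P = v ∧
  (∀ B ∈ Bs, Nat.card B = k) ∧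
  ∀ x y : P, x ≠ y → Nat.card {B : Set P | B ∈ Bs ∧ x ∈ B ∧ y ∈ B} = lam

/-- Every element of `G` is an automorphism of the design with block set `Bs`. -/
def IsAutomGroup {P : Type*} (G : Subgroup (Equiv.Perm P)) (Bs : Set (Set P)) : Prop :=
  ∀ g ∈ G, ∀ B ∈ Bs, (⇑g) '' B ∈ Bs

/-- `G` is transitive on the flags (incident point-block pairs) of the design. -/
def IsFlagTransitive {P : Type*} (G : Subgroup (Equiv.Perm P)) (Bs : Set (Set P)) : Prop :=
  ∀ B₁ ∈ Bs, ∀ B₂ ∈ Bs, ∀ x₁ ∈ B₁, ∀ x₂ ∈ B₂,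
    ∃ g ∈ G, (⇑g) '' B₁ = B₂ ∧ g x₁ = x₂

/-- The stabilizer in `G` of the point `α`. -/
def pointStab {P : Type*} (G : Subgroup (Equiv.Perm P)) (α : P) : Subgroup (Equiv.Perm P) :=
  G ⊓ MulAction.stabilizer (Equiv.Perm P) α

open Finset
open scoped Classical

section AuxCounting

variable {v k lam : ℕ} {P : Type*} [Fintype P] {Bs : Set (Set P)}

private lemma aux_card_pair (hD : IsTwoDesign v k lam P Bs) {x y : P} (hxy : x ≠ y) :
    (univ.filter fun B : Set P => B ∈ Bs ∧ x ∈ B ∧ y ∈ B).card = lam := by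
  have h := hD.2.2 x y hxy
  rwa [Nat.card_coe_set_eq, Set.ncard_eq_toFinset_card', Set.toFinset_setOf] at h

private lemma aux_card_block (hD : IsTwoDesign v k lam P Bs) {B : Set P} (hB : B ∈ Bs) :
    (univ.filter (· ∈ B)).card = k := by
  have h := hD.2.1 B hB
  rw [Nat.card_coe_set_eq, Set.ncard_eq_toFinset_card'] at h
  rw [← h]
  congr 1
  ext p
  simp

private lemma aux_replication (hD : IsTwoDesign v k lam P Bs) (x : P) :
    (univ.filter fun B : Set P => B ∈ Bs ∧ x ∈ B).card * (k - 1) = lam * (v - 1) := by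
  have hL : ∑ B : Set P, ∑ y : P, (if B ∈ Bs ∧ x ∈ B ∧ y ∈ B ∧ y ≠ x then 1 else 0)
      = (univ.filter fun B : Set P => B ∈ Bs ∧ x ∈ B).card * (k - 1) := by
    have h1 : ∀ B : Set P, ∑ y : P, (if B ∈ Bs ∧ x ∈ B ∧ y ∈ B ∧ y ≠ x then 1 else 0)
        = if B ∈ Bs ∧ x ∈ B then k - 1 else 0 := by
      intro B
      by_cases hB : B ∈ Bs ∧ x ∈ B
      · rw [if_pos hB]
        have h1 : ∑ y : P, (if B ∈ Bs ∧ x ∈ B ∧ y ∈ B ∧ y ≠ x then 1 else 0)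
            = (univ.filter fun y => y ∈ B ∧ y ≠ x).card := by
          rw [Finset.card_filter]
          exact Finset.sum_congr rfl fun y _ => by
            by_cases hy : y ∈ B ∧ y ≠ x <;> simp [hy, hB.1, hB.2]
        rw [h1]
        have h2 : (univ.filter fun y => y ∈ B ∧ y ≠ x) = (univ.filter (· ∈ B)).erase x := by
          ext y; simp [and_comm]
        rw [h2, Finset.card_erase_of_mem (by simp [hB.2]), aux_card_block hD hB.1]
      · have hall : ∀ y : P, ¬(B ∈ Bs ∧ x ∈ B ∧ y ∈ B ∧ y ≠ x) := by tauto
        simp [hall, hB]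
    rw [Finset.sum_congr rfl fun B _ => h1 B, ← Finset.sum_filter, Finset.sum_const,
      smul_eq_mul]
  have hR : ∑ y : P, ∑ B : Set P, (if B ∈ Bs ∧ x ∈ B ∧ y ∈ B ∧ y ≠ x then 1 else 0)
      = lam * (v - 1) := by
    have h1 : ∀ y : P, ∑ B : Set P, (if B ∈ Bs ∧ x ∈ B ∧ y ∈ B ∧ y ≠ x then 1 else 0)
        = if y ≠ x then lam else 0 := by
      intro y
      by_cases hy : y ≠ x
      · rw [if_pos hy, ← aux_card_pair hD (Ne.symm hy), Finset.card_filter]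
        exact Finset.sum_congr rfl fun B _ => by
          by_cases hB : B ∈ Bs ∧ x ∈ B ∧ y ∈ B <;> simp [hy] <;> tauto
      · simp only [hy, if_false]
        push_neg at hy
        subst hy
        simp
    rw [Finset.sum_congr rfl fun y _ => h1 y, ← Finset.sum_filter, Finset.sum_const,
      smul_eq_mul, mul_comm]
    congr 2
    · have hv : Fintype.card P = v := by
        rw [← hD.1, Nat.card_eq_fintype_card]
      rw [Finset.filter_ne', Finset.card_erase_of_mem (Finset.mem_univ x),
        Finset.card_univ, hv]
  rw [← hL, Finset.sum_comm, hR]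

private lemma aux_flags_count {r : ℕ}
    (hblock : ∀ B ∈ Bs, (univ.filter (· ∈ B)).card = k)
    (hr : ∀ x : P, (univ.filter fun B : Set P => B ∈ Bs ∧ x ∈ B).card = r) :
    (univ.filter (· ∈ Bs) : Finset (Set P)).card * k = Fintype.card P * r := by
  have hL : ∑ B : Set P, ∑ x : P, (if B ∈ Bs ∧ x ∈ B then 1 else 0)
      = (univ.filter (· ∈ Bs) : Finset (Set P)).card * k := by
    have h1 : ∀ B : Set P, ∑ x : P, (if B ∈ Bs ∧ x ∈ B then 1 else 0)
        = if B ∈ Bs then k else 0 := by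
      intro B
      by_cases hB : B ∈ Bs
      · rw [if_pos hB, ← hblock B hB, Finset.card_filter]
        exact Finset.sum_congr rfl fun x _ => by simp [hB]
      · simp [hB]
    rw [Finset.sum_congr rfl fun B _ => h1 B, ← Finset.sum_filter, Finset.sum_const,
      smul_eq_mul]
  have hR : ∑ x : P, ∑ B : Set P, (if B ∈ Bs ∧ x ∈ B then 1 else 0)
      = Fintype.card P * r := by
    have h1 : ∀ x : P, ∑ B : Set P, (if B ∈ Bs ∧ x ∈ B then 1 else 0) = r := by
      intro x
      rw [← hr x, Finset.card_filter]
    rw [Finset.sum_congr rfl fun x _ => h1 x, Finset.sum_const, smul_eq_mul,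
      Finset.card_univ]
  rw [← hL, Finset.sum_comm, hR]

/-- Fisher's inequality: the number of points is at most the number of blocks. -/
private lemma aux_fisher {r : ℕ}
    (hr : ∀ x : P, (univ.filter fun B : Set P => B ∈ Bs ∧ x ∈ B).card = r)
    (hpair : ∀ x y : P, x ≠ y →
      (univ.filter fun B : Set P => B ∈ Bs ∧ x ∈ B ∧ y ∈ B).card = lam)
    (hlr : lam < r) :
    Fintype.card P ≤ (univ.filter (· ∈ Bs) : Finset (Set P)).card := by
  set b : Finset (Set P) := univ.filter (· ∈ Bs) with hb
  let f : (P → ℚ) →ₗ[ℚ] (↥b → ℚ) :=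
    { toFun := fun x B => ∑ p : P, (if p ∈ (B : Set P) then (1:ℚ) else 0) * x p
      map_add' := by
        intro x y; funext B
        simp [mul_add, Finset.sum_add_distrib]
      map_smul' := by
        intro c x; funext B
        simp [Finset.mul_sum, mul_left_comm] }
  have hinj : Function.Injective f := by
    rw [injective_iff_map_eq_zero]
    intro x hx
    have key : ∑ B ∈ b, (∑ p : P, (if p ∈ B then (1:ℚ) else 0) * x p)^2
        = (r - lam : ℚ) * ∑ p : P, (x p)^2 + (lam : ℚ) * (∑ p : P, x p)^2 := by
      have e1 : ∀ B ∈ b, (∑ p : P, (if p ∈ B then (1:ℚ) else 0) * x p)^2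
          = ∑ p : P, ∑ q : P,
            ((if p ∈ B then (1:ℚ) else 0) * (if q ∈ B then (1:ℚ) else 0)) * (x p * x q) := by
        intro B _
        rw [sq, Finset.sum_mul_sum]
        exact Finset.sum_congr rfl fun p _ => Finset.sum_congr rfl fun q _ => by ring
      rw [Finset.sum_congr rfl e1, Finset.sum_comm]
      have e2 : ∀ p : P, ∑ B ∈ b, ∑ q : P,
            ((if p ∈ B then (1:ℚ) else 0) * (if q ∈ B then (1:ℚ) else 0)) * (x p * x q)
          = ∑ q : P, ((if p = q then (r:ℚ) else (lam:ℚ)) * (x p * x q)) := by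
        intro p
        rw [Finset.sum_comm]
        refine Finset.sum_congr rfl fun q _ => ?_
        rw [← Finset.sum_mul]
        congr 1
        have h3 : ∀ B ∈ b, (if p ∈ B then (1:ℚ) else 0) * (if q ∈ B then (1:ℚ) else 0)
            = if p ∈ B ∧ q ∈ B then (1:ℚ) else 0 := by
          intro B _
          by_cases h1 : p ∈ B <;> by_cases h2 : q ∈ B <;> simp [h1, h2]
        rw [Finset.sum_congr rfl h3, Finset.sum_boole]
        have h4 : (b.filter fun B => p ∈ B ∧ q ∈ B)
            = univ.filter fun B : Set P => B ∈ Bs ∧ p ∈ B ∧ q ∈ B := by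
          rw [hb, Finset.filter_filter]
        rw [h4]
        by_cases hpq : p = q
        · subst hpq
          rw [if_pos rfl]
          have h5 : (univ.filter fun B : Set P => B ∈ Bs ∧ p ∈ B ∧ p ∈ B)
              = univ.filter fun B : Set P => B ∈ Bs ∧ p ∈ B := by
            apply Finset.filter_congr; intro B _; tauto
          rw [h5, hr p]
        · rw [if_neg hpq, hpair p q hpq]
      rw [Finset.sum_congr rfl fun p _ => e2 p]
      have e3 : ∀ p : P, ∑ q : P, ((if p = q then (r:ℚ) else (lam:ℚ)) * (x p * x q))
          = (r - lam : ℚ) * (x p)^2 + (lam:ℚ) * (x p * ∑ q : P, x q) := by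
        intro p
        have h6 : ∀ q : P, ((if p = q then (r:ℚ) else (lam:ℚ)) * (x p * x q))
            = (if q = p then ((r:ℚ) - lam) * (x p * x q) else 0) + (lam:ℚ) * (x p * x q) := by
          intro q
          by_cases h : p = q
          · subst h; simp; ring
          · simp [h, Ne.symm h]
        rw [Finset.sum_congr rfl fun q _ => h6 q, Finset.sum_add_distrib,
          Finset.sum_ite_eq' univ p (fun q => ((r:ℚ) - lam) * (x p * x q))]
        simp [Finset.mul_sum, mul_left_comm, sq]
      rw [Finset.sum_congr rfl fun p _ => e3 p, Finset.sum_add_distrib, ← Finset.mul_sum,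
        ← Finset.mul_sum, ← Finset.sum_mul, sq]
    have hx0 : ∑ B ∈ b, (∑ p : P, (if p ∈ B then (1:ℚ) else 0) * x p)^2 = 0 := by
      apply Finset.sum_eq_zero
      intro B hB
      have hfB : f x ⟨B, hB⟩ = 0 := by rw [hx]; rfl
      simpa [f] using hfB
    rw [hx0] at key
    have h1 : (0:ℚ) ≤ ∑ p : P, (x p)^2 := Finset.sum_nonneg fun p _ => sq_nonneg _
    have h2 : (0:ℚ) ≤ (∑ p : P, x p)^2 := sq_nonneg _
    have hrl : (0:ℚ) < (r:ℚ) - lam := by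
      have hcast : (lam:ℚ) < r := by exact_mod_cast hlr
      linarith
    have hsum0 : ∑ p : P, (x p)^2 = 0 := by
      nlinarith [mul_nonneg (le_of_lt hrl) h1, mul_nonneg (Nat.cast_nonneg (α := ℚ) lam) h2]
    funext p
    have hp := (Finset.sum_eq_zero_iff_of_nonneg (fun q _ => sq_nonneg (x q))).mp hsum0 p
      (Finset.mem_univ p)
    have hp2 := sq_eq_zero_iff.mp hp
    simpa using hp2
  have hle := LinearMap.finrank_le_finrank_of_injective hinj
  rwa [Module.finrank_pi, Module.finrank_pi, Fintype.card_coe] at hle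

private lemma aux_card_G (G : Subgroup (Equiv.Perm P)) (α : P)
    (htrans : ∀ y : P, ∃ g ∈ G, g α = y) :
    Nat.card G = Fintype.card P * Nat.card (pointStab G α) := by
  have horb : MulAction.orbit G α = Set.univ := by
    apply Set.eq_univ_iff_forall.mpr
    intro y
    obtain ⟨g, hg, hgy⟩ := htrans y
    exact MulAction.mem_orbit_iff.mpr ⟨⟨g, hg⟩, hgy⟩
  have hos := MulAction.card_orbit_mul_card_stabilizer_eq_card_group G α
  have hcorb : Fintype.card (MulAction.orbit G α) = Fintype.card P :=
    Fintype.card_congr ((Equiv.setCongr horb).trans (Equiv.Set.univ P))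
  have e : pointStab G α ≃ MulAction.stabilizer G α :=
    { toFun := fun g => ⟨⟨g.1, (Subgroup.mem_inf.mp g.2).1⟩, (Subgroup.mem_inf.mp g.2).2⟩
      invFun := fun g => ⟨g.1.1, Subgroup.mem_inf.mpr ⟨g.1.2, g.2⟩⟩
      left_inv := fun g => rfl
      right_inv := fun g => rfl }
  rw [Nat.card_eq_fintype_card, Nat.card_congr e, Nat.card_eq_fintype_card, ← hos, hcorb]

end AuxCounting

/-- If `G` is a flag-transitive group of automorphisms of a nontrivial
`2`-`(v, k, λ)` design and `α` is a point, then `|G_α|³ > λ|G|`. -/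
theorem stab_cube_gt (v k lam : ℕ) (P : Type*) (Bs : Set (Set P))
    (hD : IsTwoDesign v k lam P Bs) (hk : 2 < k) (hkv : k < v)
    (G : Subgroup (Equiv.Perm P)) (hGaut : IsAutomGroup G Bs)
    (hft : IsFlagTransitive G Bs) (α : P) :
    lam * Nat.card G < Nat.card (pointStab G α) ^ 3 := by
  classical
  have hv4 : 4 ≤ v := by omega
  have hfinP : Finite P := by
    have : 0 < Nat.card P := by rw [hD.1]; omega
    exact (Nat.card_pos_iff.mp this).2
  letI : Fintype P := Fintype.ofFinite P
  have hcardP : Fintype.card P = v := by rw [← Nat.card_eq_fintype_card, hD.1]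
  set s := Nat.card (pointStab G α) with hs
  have hspos : 0 < s := Nat.card_pos
  rcases Nat.eq_zero_or_pos lam with hlam0 | hlampos
  · rw [hlam0, zero_mul]
    exact pow_pos hspos 3
  -- replication number
  set r := (univ.filter fun B : Set P => B ∈ Bs ∧ α ∈ B).card with hrdef
  have hrk1 : r * (k - 1) = lam * (v - 1) := aux_replication hD α
  have hrx : ∀ x : P, (univ.filter fun B : Set P => B ∈ Bs ∧ x ∈ B).card = r := by
    intro x
    have h := aux_replication hD x
    have hk1 : 0 < k - 1 := by omega
    exact Nat.eq_of_mul_eq_mul_right hk1 (by rw [h, ← hrk1])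
  have hlr : lam < r := by
    have h1 : lam * (k - 1) < lam * (v - 1) := by
      exact Nat.mul_lt_mul_of_le_of_lt (le_refl lam) (by omega) hlampos
    rw [← hrk1] at h1
    exact Nat.lt_of_mul_lt_mul_right h1
  -- Fisher's inequality and k ≤ r
  have hfish : Fintype.card P ≤ (univ.filter (· ∈ Bs) : Finset (Set P)).card :=
    aux_fisher hrx (fun x y hxy => aux_card_pair hD hxy) hlr
  have hflag : (univ.filter (· ∈ Bs) : Finset (Set P)).card * k = Fintype.card P * r :=
    aux_flags_count (fun B hB => aux_card_block hD hB) hrx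
  have hkr : k ≤ r := by
    have h1 : Fintype.card P * k ≤ Fintype.card P * r := by
      calc Fintype.card P * k ≤ (univ.filter (· ∈ Bs) : Finset (Set P)).card * k :=
              Nat.mul_le_mul_right k hfish
        _ = Fintype.card P * r := hflag
    exact Nat.le_of_mul_le_mul_left h1 (by omega)
  -- every point lies on a block
  have hex : ∀ x : P, ∃ B ∈ Bs, x ∈ B := by
    intro x
    obtain ⟨y, hy⟩ : ∃ y : P, y ≠ x := Fintype.exists_ne_of_one_lt_card (by omega) x
    have hcard := aux_card_pair hD (Ne.symm hy)
    have hne : (univ.filter fun B : Set P => B ∈ Bs ∧ x ∈ B ∧ y ∈ B).Nonempty := by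
      apply Finset.card_pos.mp
      rw [hcard]; omega
    obtain ⟨B, hB⟩ := hne
    rw [Finset.mem_filter] at hB
    exact ⟨B, hB.2.1, hB.2.2.1⟩
  -- point transitivity
  have htrans : ∀ y : P, ∃ g ∈ G, g α = y := by
    intro y
    obtain ⟨B₁, hB₁, hB₁α⟩ := hex α
    obtain ⟨B₂, hB₂, hB₂y⟩ := hex y
    obtain ⟨g, hg, _, hgy⟩ := hft B₁ hB₁ B₂ hB₂ α hB₁α y hB₂y
    exact ⟨g, hg, hgy⟩
  have hG : Nat.card G = v * s := by
    rw [aux_card_G G α htrans, hcardP]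
  -- r ≤ s
  have hrs : r ≤ s := by
    obtain ⟨B₀, hB₀, hB₀α⟩ := hex α
    have hr_eq : r = Nat.card {B : Set P // B ∈ Bs ∧ α ∈ B} := by
      rw [Nat.card_eq_fintype_card, Fintype.card_subtype]
    let φ : pointStab G α → {B : Set P // B ∈ Bs ∧ α ∈ B} := fun g =>
      ⟨(g.1 : Equiv.Perm P) '' B₀,
        hGaut g.1 (Subgroup.mem_inf.mp g.2).1 B₀ hB₀,
        ⟨α, hB₀α, (Subgroup.mem_inf.mp g.2).2⟩⟩
    have hφ : Function.Surjective φ := by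
      rintro ⟨B, hB, hBα⟩
      obtain ⟨g, hg, hgB, hgα⟩ := hft B₀ hB₀ B hB α hB₀α α hBα
      refine ⟨⟨g, Subgroup.mem_inf.mpr ⟨hg, hgα⟩⟩, ?_⟩
      exact Subtype.ext hgB
    rw [hr_eq]
    exact Nat.card_le_card_of_surjective φ hφ
  -- final arithmetic
  have h1 : lam * v < r * k := by
    have hv1 : v - 1 + 1 = v := by omega
    have hk1 : k - 1 + 1 = k := by omega
    calc lam * v = lam * (v - 1) + lam := by rw [← hv1, Nat.mul_succ, hv1]
      _ = r * (k - 1) + lam := by rw [hrk1]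
      _ < r * (k - 1) + r := by omega
      _ = r * k := by rw [← hk1, Nat.mul_succ, hk1]
  have h2 : r * k ≤ s * s := Nat.mul_le_mul hrs (le_trans hkr hrs)
  calc lam * Nat.card G = (lam * v) * s := by rw [hG]; ring
    _ < (s * s) * s := by
        exact Nat.mul_lt_mul_of_lt_of_le (lt_of_lt_of_le h1 h2) (le_refl s) hspos
    _ = s ^ 3 := by ring
end

section
/- Let D be a nontrivial 2-(v,k,λ) design with replication number r, let G ≤ Aut(D) be flag-transitive, and let α be a point of D. Then r divides λ·gcd(v−1, |G_α|). -/
open Pointwise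


/-- Every point lies on exactly `r` blocks (`r` is the replication number). -/
def HasReplication {P : Type*} (Bs : Set (Set P)) (r : ℕ) : Prop :=
  ∀ x : P, Nat.card {B : Set P | B ∈ Bs ∧ x ∈ B} = r

/-- If `G` is a flag-transitive group of automorphisms of a nontrivial
`2`-`(v, k, λ)` design with replication number `r` and `α` is a point, then
`r` divides `λ · gcd(v-1, |G_α|)`. -/
theorem repl_dvd_lam_mul_gcd (v k lam r : ℕ) (P : Type*) (Bs : Set (Set P))
    (hD : IsTwoDesign v k lam P Bs) (hk : 2 < k) (hkv : k < v)
    (hr : HasReplication Bs r)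
    (G : Subgroup (Equiv.Perm P)) (hGaut : IsAutomGroup G Bs)
    (hft : IsFlagTransitive G Bs) (α : P) :
    r ∣ lam * Nat.gcd (v - 1) (Nat.card (pointStab G α)) := by
  classical
  obtain ⟨hv, hBk, hpair⟩ := hD
  have hv4 : 4 ≤ v := by omega
  have hfin : Finite P := Nat.finite_of_card_ne_zero (by omega)
  cases nonempty_fintype P
  -- the set of blocks through α
  set S : Set (Set P) := {B | B ∈ Bs ∧ α ∈ B} with hS
  have hScard : Nat.card S = r := hr α
  -- Step A: counting identity r * (k-1) = (v-1) * lam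
  have hcount : r * (k - 1) = (v - 1) * lam := by
    set N : Finset (Set P × P) :=
      Finset.univ.filter (fun p => p.1 ∈ Bs ∧ α ∈ p.1 ∧ p.2 ∈ p.1 ∧ p.2 ≠ α) with hN
    have hmemN : ∀ p : Set P × P,
        p ∈ N ↔ p.1 ∈ Bs ∧ α ∈ p.1 ∧ p.2 ∈ p.1 ∧ p.2 ≠ α := by
      intro p; simp [hN]
    -- count by first coordinate
    set Bb : Finset (Set P) := Finset.univ.filter (fun B => B ∈ Bs ∧ α ∈ B) with hBb
    have hBbcard : Bb.card = r := by
      have := hr α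
      rw [Nat.card_coe_set_eq, Set.ncard_eq_toFinset_card', Set.toFinset_setOf] at this
      exact this
    have h1 : N.card = r * (k - 1) := by
      rw [Finset.card_eq_sum_card_fiberwise (f := Prod.fst) (t := Bb)
        (fun p hp => by
          rw [Finset.mem_coe, hmemN] at hp
          simp [hBb, hp.1, hp.2.1])]
      rw [Finset.sum_congr rfl (fun B hB => ?_), Finset.sum_const, hBbcard, smul_eq_mul]
      · -- fiber over B has card k - 1
        rw [Finset.mem_filter] at hB
        obtain ⟨-, hBBs, hαB⟩ := hB
        have hcardB : B.toFinset.card = k := by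
          have := hBk B hBBs
          rwa [Nat.card_coe_set_eq, Set.ncard_eq_toFinset_card'] at this
        have : (N.filter (fun p => p.1 = B)).card = (B.toFinset.erase α).card := by
          refine Finset.card_bij' (fun p _ => p.2) (fun y _ => (B, y)) ?_ ?_ ?_ ?_
          · intro p hp
            rw [Finset.mem_filter] at hp
            obtain ⟨hp, hp1⟩ := hp
            rw [hmemN] at hp
            rw [hp1] at hp
            simp [Finset.mem_erase, hp.2.2.1, hp.2.2.2]
          · intro y hy
            rw [Finset.mem_erase, Set.mem_toFinset] at hy
            rw [Finset.mem_filter, hmemN]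
            exact ⟨⟨hBBs, hαB, hy.2, hy.1⟩, rfl⟩
          · intro p hp
            rw [Finset.mem_filter] at hp
            exact Prod.ext hp.2.symm rfl
          · intro y _; rfl
        rw [this, Finset.card_erase_of_mem (Set.mem_toFinset.2 hαB), hcardB]
    -- count by second coordinate
    have h2 : N.card = (v - 1) * lam := by
      rw [Finset.card_eq_sum_card_fiberwise (f := Prod.snd) (t := Finset.univ.erase α)
        (fun p hp => by
          rw [Finset.mem_coe, hmemN] at hp
          simp [Finset.mem_erase, hp.2.2.2])]
      rw [Finset.sum_congr rfl (fun y hy => ?_), Finset.sum_const, smul_eq_mul,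
        Finset.card_erase_of_mem (Finset.mem_univ α), Finset.card_univ,
        ← Nat.card_eq_fintype_card, hv]
      · -- fiber over y has card lam
        rw [Finset.mem_erase] at hy
        have hyα : α ≠ y := fun h => hy.1 h.symm
        have hlam := hpair α y hyα
        rw [Nat.card_coe_set_eq, Set.ncard_eq_toFinset_card'] at hlam
        rw [← hlam]
        refine Finset.card_bij' (fun p _ => p.1) (fun B _ => (B, y)) ?_ ?_ ?_ ?_
        · intro p hp
          rw [Finset.mem_filter] at hp
          obtain ⟨hp, hp2⟩ := hp
          rw [hmemN] at hp
          rw [hp2] at hp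
          rw [Set.mem_toFinset]
          exact ⟨hp.1, hp.2.1, hp.2.2.1⟩
        · intro B hB
          rw [Set.mem_toFinset] at hB
          rw [Finset.mem_filter, hmemN]
          exact ⟨⟨hB.1, hB.2.1, hB.2.2, fun h => hy.1 h⟩, rfl⟩
        · intro p hp
          rw [Finset.mem_filter] at hp
          exact Prod.ext rfl hp.2.symm
        · intro B _; rfl
    omega
  rcases Nat.eq_zero_or_pos r with hr0 | hrpos
  · subst hr0
    have : lam = 0 := by
      have h := hcount
      have : 0 < v - 1 := by omega
      nlinarith
    simp [this]
  -- Step B: r divides |G_α|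
  have hdvd : r ∣ Nat.card (pointStab G α) := by
    have hSne : S.Nonempty := by
      apply Set.nonempty_of_ncard_ne_zero
      rw [← Nat.card_coe_set_eq, hScard]; omega
    obtain ⟨B₀, hB₀⟩ := hSne
    -- orbit of B₀ under pointStab G α equals S
    have hsmul : ∀ (h : (pointStab G α : Subgroup (Equiv.Perm P))) (B : Set P),
        h • B = (⇑(h : Equiv.Perm P)) '' B := by
      intro h B
      rfl
    have horb : MulAction.orbit (pointStab G α) B₀ = S := by
      ext B
      constructor
      · rintro ⟨h, rfl⟩
        obtain ⟨hG, hstab⟩ := h.2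
        simp only [hsmul]
        refine ⟨hGaut _ hG _ hB₀.1, ?_⟩
        have : (h : Equiv.Perm P) α = α := hstab
        exact ⟨α, hB₀.2, this⟩
      · intro hB
        obtain ⟨g, hgG, hgB, hgα⟩ := hft B₀ hB₀.1 B hB.1 α hB₀.2 α hB.2
        refine ⟨⟨g, hgG, hgα⟩, ?_⟩
        simp only [hsmul]
        exact hgB
    have hos := Nat.card_congr (MulAction.orbitProdStabilizerEquivGroup (pointStab G α) B₀)
    rw [Nat.card_prod] at hos
    have hdvd' : Nat.card (MulAction.orbit (pointStab G α) B₀) ∣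
        Nat.card (pointStab G α) := ⟨_, hos.symm⟩
    rwa [horb, hScard] at hdvd'
  have h1 : r ∣ lam * (v - 1) := ⟨k - 1, by rw [mul_comm lam]; exact hcount.symm⟩
  have h2 : r ∣ lam * Nat.card (pointStab G α) := hdvd.mul_left lam
  have h3 := Nat.dvd_gcd h1 h2
  rwa [Nat.gcd_mul_left] at h3
end

section
/- Let D be a nontrivial 2-(v,k,λ) design with replication number r, and let G ≤ Aut(D) be flag-transitive (so G is transitive on the point set P). If s is a nontrivial subdegree of G, that is, s is the cardinality of an orbit of a point stabilizer G_α on P other than the orbit {α}, then r divides s·gcd(r,λ). -/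
/-- If `G` is a flag-transitive group of automorphisms of a nontrivial
`2`-`(v, k, λ)` design with replication number `r`, and `s` is the size of an
orbit of the point stabilizer `G_α` on the points which is not the orbit `{α}`
(a nontrivial subdegree of `G`), then `r` divides `s · gcd(r, λ)`. -/
theorem repl_dvd_subdegree_mul_gcd (v k lam r : ℕ) (P : Type*) (Bs : Set (Set P))
    (hD : IsTwoDesign v k lam P Bs) (hk : 2 < k) (hkv : k < v)
    (hr : HasReplication Bs r)
    (G : Subgroup (Equiv.Perm P)) (hGaut : IsAutomGroup G Bs)
    (hft : IsFlagTransitive G Bs) (α β : P) (s : ℕ)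
    (hs : s = Nat.card {γ : P | ∃ g ∈ G, g α = α ∧ g β = γ})
    (hnt : {γ : P | ∃ g ∈ G, g α = α ∧ g β = γ} ≠ {α}) :
    r ∣ s * Nat.gcd r lam := by

  classical
  obtain ⟨hv, hblk, hpair⟩ := hD
  have hfinP : Finite P := by
    have hvpos : 0 < Nat.card P := by omega
    exact (Nat.card_pos_iff.mp hvpos).2
  haveI := Fintype.ofFinite P
  set Δ : Set P := {γ : P | ∃ g ∈ G, g α = α ∧ g β = γ} with hΔdef
  -- β ≠ α
  have hβα : β ≠ α := by
    intro h
    apply hnt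
    subst h
    ext γ
    constructor
    · rintro ⟨g, hg, h1, h2⟩
      simp only [Set.mem_singleton_iff]
      rw [← h2, h1]
    · rintro h
      exact ⟨1, G.one_mem, by simp, by simpa using h.symm⟩
  have hαΔ : α ∉ Δ := by
    rintro ⟨g, hg, h1, h2⟩
    exact hβα (g.injective (h2.trans h1.symm))
  have hΔinv : ∀ g ∈ G, (g : Equiv.Perm P) α = α → ∀ γ ∈ Δ, g γ ∈ Δ := by
    rintro g hg hgα γ ⟨h, hh, h1, h2⟩
    exact ⟨g * h, G.mul_mem hg hh, by rw [Equiv.Perm.mul_apply, h1, hgα],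
      by rw [Equiv.Perm.mul_apply, h2]⟩
  rcases Nat.eq_zero_or_pos lam with hlam | hlam
  · rw [hlam, Nat.gcd_zero_right]
    exact dvd_mul_left r s
  suffices hdvd : r ∣ s * lam by
    have hd : 0 < Nat.gcd r lam := Nat.gcd_pos_of_pos_right r hlam
    set d := Nat.gcd r lam with hdd
    have hdr : d ∣ r := Nat.gcd_dvd_left r lam
    have hdl : d ∣ lam := Nat.gcd_dvd_right r lam
    obtain ⟨t, ht⟩ := hdvd
    have h1 : r / d ∣ s * (lam / d) := by
      refine ⟨t, ?_⟩
      apply Nat.eq_of_mul_eq_mul_right hd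
      calc s * (lam / d) * d = s * (lam / d * d) := by ring
        _ = s * lam := by rw [Nat.div_mul_cancel hdl]
        _ = r * t := ht
        _ = r / d * d * t := by rw [Nat.div_mul_cancel hdr]
        _ = r / d * t * d := by ring
    have hcop : Nat.Coprime (r / d) (lam / d) := Nat.coprime_div_gcd_div_gcd hd
    have h2 : r / d ∣ s := hcop.dvd_of_dvd_mul_right h1
    have h3 := mul_dvd_mul_right h2 d
    rwa [Nat.div_mul_cancel hdr] at h3
  -- main counting argument
  set BA : Finset (Set P) := ({B : Set P | B ∈ Bs ∧ α ∈ B} : Set (Set P)).toFinset with hBA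
  set Δf : Finset P := Δ.toFinset with hΔf
  have hBAcard : BA.card = r := by
    rw [hBA, ← Set.ncard_eq_toFinset_card', ← Nat.card_coe_set_eq]
    exact hr α
  have hΔfcard : Δf.card = s := by
    rw [hΔf, ← Set.ncard_eq_toFinset_card', ← Nat.card_coe_set_eq, hs]
  -- each point of Δ lies with α in exactly lam blocks
  have hγlam : ∀ γ ∈ Δf, (BA.filter fun B => γ ∈ B).card = lam := by
    intro γ hγ
    have hγα : α ≠ γ := by
      intro h
      exact hαΔ (by rw [h]; exact Set.mem_toFinset.mp hγ)
    have := hpair α γ hγα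
    rw [← this, Nat.card_coe_set_eq, Set.ncard_eq_toFinset_card']
    congr 1
    ext B
    simp [hBA, Set.mem_toFinset, and_assoc]; tauto
  -- there is a block through α
  have hBnonempty : ∃ B₀, B₀ ∈ Bs ∧ α ∈ B₀ := by
    have := hpair α β (Ne.symm hβα)
    have hpos : 0 < Nat.card {B : Set P | B ∈ Bs ∧ α ∈ B ∧ β ∈ B} := by omega
    obtain ⟨⟨B, hB⟩⟩ := (Nat.card_pos_iff.mp hpos).1
    exact ⟨B, hB.1, hB.2.1⟩
  obtain ⟨B₀, hB₀Bs, hB₀α⟩ := hBnonempty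
  have hB₀ : B₀ ∈ BA := by simp [hBA, Set.mem_toFinset, hB₀Bs, hB₀α]
  set c : ℕ := (Δf.filter fun γ => γ ∈ B₀).card with hc
  -- each block through α meets Δ in exactly c points
  have hconst : ∀ B ∈ BA, (Δf.filter fun γ => γ ∈ B).card = c := by
    intro B hB
    rw [Set.mem_toFinset] at hB
    obtain ⟨g, hg, hgB, hgα⟩ := hft B₀ hB₀Bs B hB.1 α hB₀α α hB.2
    have hgΔ : (⇑g) '' Δ = Δ := by
      apply Set.Subset.antisymm
      · rintro x ⟨y, hy, rfl⟩
        exact hΔinv g hg hgα y hy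
      · intro x hx
        have hginv : (g⁻¹ : Equiv.Perm P) α = α := by
          conv_lhs => rw [← hgα]
          exact Equiv.symm_apply_apply g α
        refine ⟨(g⁻¹ : Equiv.Perm P) x, hΔinv g⁻¹ (G.inv_mem hg) hginv x hx, ?_⟩
        exact Equiv.apply_symm_apply g x
    have himg : (⇑g) '' (Δ ∩ B₀) = Δ ∩ B := by
      rw [Set.image_inter g.injective, hgΔ, hgB]
    have hncard : (Δ ∩ B₀).ncard = (Δ ∩ B).ncard := by
      rw [← himg, Set.ncard_image_of_injective _ g.injective]
    have e1 : (Δf.filter fun γ => γ ∈ B₀) = (Δ ∩ B₀).toFinset := by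
      ext x; simp [hΔf, Set.mem_toFinset]
    have e2 : (Δf.filter fun γ => γ ∈ B) = (Δ ∩ B).toFinset := by
      ext x; simp [hΔf, Set.mem_toFinset]
    rw [e2, hc, e1, ← Set.ncard_eq_toFinset_card', ← Set.ncard_eq_toFinset_card', hncard]
  -- double counting
  have key : (∑ γ ∈ Δf, (BA.filter fun B => γ ∈ B).card)
      = ∑ B ∈ BA, (Δf.filter fun γ => γ ∈ B).card := by
    simp_rw [Finset.card_filter]
    exact Finset.sum_comm
  have lhs : (∑ γ ∈ Δf, (BA.filter fun B => γ ∈ B).card) = s * lam := by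
    rw [Finset.sum_congr rfl hγlam, Finset.sum_const, smul_eq_mul, hΔfcard]
  have rhs : (∑ B ∈ BA, (Δf.filter fun γ => γ ∈ B).card) = r * c := by
    rw [Finset.sum_congr rfl hconst, Finset.sum_const, smul_eq_mul, hBAcard]
  exact ⟨c, by rw [← lhs, key, rhs]⟩
end

section
/- Let D be a nontrivial 2-(v,k,2) design with replication number r, let G ≤ Aut(D) be flag-transitive, and let X be a normal subgroup of G that is isomorphic to PSL(n,q) (n ≥ 3, q = p^f) and acts transitively on the point set P; set d = gcd(n,q−1) and suppose the index [G:X] divides 2df (as holds when G ≤ Aut(X), since |Out(PSL(n,q))| = 2df for n ≥ 3). Then for any point α: (i) |X| < 2(df)²|X_α|³; (ii) r divides 2df|X_α|; and (iii) if p divides v, then the p-part r_p of r divides 2, r divides 2df·|X_α|_{p'}, and |X| < 2(df)²·|X_α|_{p'}²·|X_α|. -/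
open scoped MatrixGroups

section AuxLemmas

open Finset Matrix in
/-- Basic arithmetic facts for a nontrivial `2`-`(v,k,2)` design, including the
consequence `2v < r²` of Fisher's inequality. -/
private lemma design_facts' {P : Type*} [Fintype P] (v k r : ℕ)
    (Bs : Set (Set P)) (hD : IsTwoDesign v k 2 P Bs) (hk : 2 < k) (hkv : k < v)
    (hr : HasReplication Bs r) :
    r * (k - 1) = 2 * (v - 1) ∧ 2 < r ∧ 2 * v < r ^ 2 := by
  classical
  obtain ⟨hv, hkcard, hlam⟩ := hD
  have hfin : Bs.Finite := Set.toFinite Bs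
  set bF : Finset (Set P) := hfin.toFinset with hbF
  have hvP : Fintype.card P = v := by rw [← Nat.card_eq_fintype_card, hv]
  have hv4 : 4 ≤ v := by omega
  -- block sizes
  have hsize : ∀ B ∈ bF, B.toFinset.card = k := by
    intro B hB
    rw [Set.toFinset_card, ← Nat.card_eq_fintype_card]
    exact hkcard B (hfin.mem_toFinset.mp hB)
  -- replication as finset count
  have hrep : ∀ x : P, (bF.filter fun B => x ∈ B).card = r := by
    intro x
    have h1 : {B : Set P | B ∈ Bs ∧ x ∈ B}.toFinset = bF.filter fun B => x ∈ B := by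
      ext B; simp [hbF]
    rw [← h1, ← Set.ncard_eq_toFinset_card', ← Nat.card_coe_set_eq]
    exact hr x
  -- pair counts
  have hpair : ∀ x y : P, x ≠ y → (bF.filter fun B => x ∈ B ∧ y ∈ B).card = 2 := by
    intro x y hxy
    have h1 : {B : Set P | B ∈ Bs ∧ x ∈ B ∧ y ∈ B}.toFinset
        = bF.filter fun B => x ∈ B ∧ y ∈ B := by
      ext B; simp [hbF, and_assoc]; tauto
    rw [← h1, ← Set.ncard_eq_toFinset_card', ← Nat.card_coe_set_eq]
    exact hlam x y hxy
  have hPne : Nonempty P := by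
    have : 0 < Fintype.card P := by omega
    exact Fintype.card_pos_iff.mp this
  obtain ⟨α⟩ := hPne
  -- first double count : r * (k-1) = 2 * (v-1)
  have hcount1 : r * (k - 1) = 2 * (v - 1) := by
    have inner1 : ∀ B ∈ bF,
        (∑ y : P, if α ∈ B ∧ y ∈ B ∧ y ≠ α then 1 else 0)
          = if α ∈ B then k - 1 else 0 := by
      intro B hB
      by_cases hα : α ∈ B
      · simp only [hα, true_and, if_true]
        rw [← Finset.card_filter]
        have : (univ.filter fun y => y ∈ B ∧ y ≠ α) = B.toFinset.erase α := by
          ext y; simp [and_comm]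
        rw [this, Finset.card_erase_of_mem (by simpa using hα), hsize B hB]
      · simp [hα]
    have lhs1 : (∑ B ∈ bF, ∑ y : P, if α ∈ B ∧ y ∈ B ∧ y ≠ α then 1 else 0)
        = r * (k - 1) := by
      rw [Finset.sum_congr rfl inner1, Finset.sum_ite, Finset.sum_const, Finset.sum_const]
      simp [hrep α, mul_comm]
    have inner2 : ∀ y : P,
        (∑ B ∈ bF, if α ∈ B ∧ y ∈ B ∧ y ≠ α then 1 else 0)
          = if y ≠ α then 2 else 0 := by
      intro y
      by_cases hy : y = α
      · simp [hy]
      · have hEq : (∑ B ∈ bF, if α ∈ B ∧ y ∈ B ∧ y ≠ α then 1 else 0)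
            = ∑ B ∈ bF, if α ∈ B ∧ y ∈ B then 1 else 0 :=
          Finset.sum_congr rfl fun B _ => by simp [hy]
        rw [hEq, ← Finset.card_filter, hpair α y fun h => hy h.symm, if_pos hy]
    have rhs1 : (∑ y : P, ∑ B ∈ bF, if α ∈ B ∧ y ∈ B ∧ y ≠ α then 1 else 0)
        = 2 * (v - 1) := by
      rw [Finset.sum_congr rfl (fun y _ => inner2 y), Finset.sum_ite, Finset.sum_const,
        Finset.sum_const]
      have h2 : (univ.filter fun y : P => y ≠ α) = univ.erase α := by
        ext y; simp
      simp [h2, Finset.card_erase_of_mem, hvP, mul_comm]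
    rw [← lhs1, Finset.sum_comm, rhs1]
  -- flag double count : b * k = v * r
  have hflags : bF.card * k = v * r := by
    have lhs1 : (∑ B ∈ bF, ∑ y : P, if y ∈ B then 1 else 0) = bF.card * k := by
      have h1 : ∀ B ∈ bF, (∑ y : P, if y ∈ B then 1 else 0) = k := by
        intro B hB
        rw [← Finset.card_filter]
        have : (univ.filter fun y => y ∈ B) = B.toFinset := by ext y; simp
        rw [this, hsize B hB]
      rw [Finset.sum_congr rfl h1, Finset.sum_const, smul_eq_mul]
    have rhs1 : (∑ y : P, ∑ B ∈ bF, if y ∈ B then 1 else 0) = v * r := by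
      have h1 : ∀ y : P, (∑ B ∈ bF, if y ∈ B then 1 else 0) = r := by
        intro y; rw [← Finset.card_filter, hrep y]
      rw [Finset.sum_congr rfl (fun y _ => h1 y), Finset.sum_const, smul_eq_mul,
        Finset.card_univ, hvP]
    rw [← lhs1, Finset.sum_comm, rhs1]
  -- r > 2
  have hr2 : 2 < r := by
    by_contra h
    push_neg at h
    have h1 : r * (k - 1) ≤ 2 * (k - 1) := Nat.mul_le_mul_right _ h
    have h2 : 2 * (k - 1) < 2 * (v - 1) := by omega
    omega
  -- Fisher : v ≤ b
  have hfisher : v ≤ bF.card := by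
    let N : Matrix P (↥bF) ℝ := Matrix.of fun x B => if x ∈ (B : Set P) then 1 else 0
    have hM : N * Nᵀ = Matrix.diagonal (fun _ => (r : ℝ) - 2)
        + Matrix.of (fun _ _ => (2 : ℝ)) := by
      ext x y
      simp only [Matrix.mul_apply, Matrix.transpose_apply, Matrix.of_apply, N]
      have hsum : (∑ B : ↥bF, (if x ∈ (B : Set P) then (1:ℝ) else 0)
            * (if y ∈ (B : Set P) then (1:ℝ) else 0))
          = ((bF.filter fun B => x ∈ B ∧ y ∈ B).card : ℝ) := by
        rw [Finset.sum_coe_sort bF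
          (fun B => (if x ∈ B then (1:ℝ) else 0) * (if y ∈ B then (1:ℝ) else 0))]
        rw [Finset.card_filter]
        push_cast
        refine Finset.sum_congr rfl fun B _ => ?_
        by_cases hx : x ∈ B <;> by_cases hy : y ∈ B <;> simp [hx, hy]
      rw [hsum]
      by_cases hxy : x = y
      · subst hxy
        have : (bF.filter fun B => x ∈ B ∧ x ∈ B) = bF.filter fun B => x ∈ B := by
          ext B; simp
        rw [this, hrep x]
        simp [Matrix.diagonal_apply_eq]
      · rw [hpair x y hxy]
        simp [Matrix.diagonal_apply_ne _ hxy]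
    have hpos : (N * Nᵀ).PosDef := by
      rw [hM]
      apply Matrix.PosDef.add_posSemidef
      · rw [Matrix.posDef_diagonal_iff]
        intro i
        have : (2 : ℝ) < r := by exact_mod_cast hr2
        linarith
      · have h2 : Matrix.of (fun _ _ => (2 : ℝ))
            = (Matrix.of fun (_ : Fin 2) (_ : P) => (1:ℝ))ᴴ
              * (Matrix.of fun (_ : Fin 2) (_ : P) => (1:ℝ)) := by
          ext x y
          simp [Matrix.mul_apply, Matrix.conjTranspose_apply, Fin.sum_univ_two]
        rw [h2]
        exact Matrix.posSemidef_conjTranspose_mul_self _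
    calc v = Fintype.card P := hvP.symm
      _ = (N * Nᵀ).rank := (Matrix.rank_of_isUnit _ hpos.isUnit).symm
      _ ≤ N.rank := Matrix.rank_mul_le_left _ _
      _ ≤ Fintype.card ↥bF := N.rank_le_card_width
      _ = bF.card := Fintype.card_coe bF
  -- k ≤ r
  have hkr : k ≤ r := by
    have h1 : v * k ≤ bF.card * k := Nat.mul_le_mul_right _ hfisher
    rw [hflags] at h1
    exact Nat.le_of_mul_le_mul_left h1 (by omega)
  refine ⟨hcount1, hr2, ?_⟩
  have h2v : 2 * v = r * (k - 1) + 2 := by omega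
  calc 2 * v = r * (k - 1) + 2 := h2v
    _ ≤ r * (r - 1) + 2 := by
        have := Nat.mul_le_mul_left r (show k - 1 ≤ r - 1 by omega); omega
    _ < r * (r - 1) + r := by omega
    _ = r * r := by
        have h : r - 1 + 1 = r := by omega
        calc r * (r - 1) + r = r * (r - 1 + 1) := by ring
          _ = r * r := by rw [h]
    _ = r ^ 2 := (sq r).symm

open MulAction in
/-- Orbit–stabilizer for a point-transitive subgroup of `Perm P`. -/
private lemma card_of_transitive' {P : Type*} [Finite P] (X : Subgroup (Equiv.Perm P))
    (hXtrans : ∀ x y : P, ∃ g ∈ X, g x = y) (α : P) :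
    Nat.card X = Nat.card P * Nat.card (pointStab X α) := by
  classical
  have : IsPretransitive X P := ⟨fun x y => by
    obtain ⟨g, hg, hgx⟩ := hXtrans x y
    exact ⟨⟨g, hg⟩, hgx⟩⟩
  have h1 : (stabilizer (↥X) α).index = Nat.card P :=
    index_stabilizer_of_transitive (↥X) α
  have h2 := Subgroup.index_mul_card (stabilizer (↥X) α)
  have h3 : stabilizer (↥X) α = (stabilizer (Equiv.Perm P) α).subgroupOf X := by
    ext g
    simp [MulAction.mem_stabilizer_iff, Subgroup.mem_subgroupOf, Subgroup.smul_def]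
  have h4 : Nat.card (stabilizer (↥X) α) = Nat.card (pointStab X α) := by
    rw [h3, ← Subgroup.inf_subgroupOf_left]
    exact Nat.card_congr (Subgroup.subgroupOfEquivOfLe inf_le_left).toEquiv
  rw [← h2, h1, h4]

open MulAction Pointwise in
/-- The replication number divides the order of a point stabilizer in a
flag-transitive automorphism group. -/
private lemma repl_dvd_card_pointStab' {P : Type*} [Finite P] (Bs : Set (Set P)) (r : ℕ)
    (hr : HasReplication Bs r) (G : Subgroup (Equiv.Perm P)) (hGaut : IsAutomGroup G Bs)
    (hft : IsFlagTransitive G Bs) (α : P) (B₀ : Set P) (hB₀ : B₀ ∈ Bs) (hαB₀ : α ∈ B₀) :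
    r ∣ Nat.card (pointStab G α) := by
  classical
  set H := pointStab G α with hHdef
  have hsmul : ∀ (g : ↥H) (B : Set P), g • B = (⇑(g : Equiv.Perm P)) '' B := by
    intro g B
    ext x
    simp only [Set.mem_smul_set, Subgroup.smul_def, Equiv.Perm.smul_def, Set.mem_image]
  have hmem : ∀ g : ↥H, (g : Equiv.Perm P) ∈ G ∧ (g : Equiv.Perm P) α = α := by
    intro g
    obtain ⟨hg1, hg2⟩ := g.2
    exact ⟨hg1, hg2⟩
  have horb : orbit (↥H) B₀ = {B : Set P | B ∈ Bs ∧ α ∈ B} := by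
    ext B
    constructor
    · rintro ⟨g, rfl⟩
      obtain ⟨hg1, hg2⟩ := hmem g
      show ((g : Equiv.Perm P) '' B₀) ∈ {B | B ∈ Bs ∧ α ∈ B}
      exact ⟨hGaut _ hg1 B₀ hB₀, ⟨α, hαB₀, hg2⟩⟩
    · rintro ⟨hB, hαB⟩
      obtain ⟨g, hgG, himg, hgα⟩ := hft B₀ hB₀ B hB α hαB₀ α hαB
      have hgH : g ∈ H := by
        refine ⟨hgG, ?_⟩
        simp [MulAction.mem_stabilizer_iff, Equiv.Perm.smul_def, hgα]
      refine ⟨⟨g, hgH⟩, ?_⟩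
      show ((⟨g, hgH⟩ : ↥H) : Equiv.Perm P) '' B₀ = B
      exact himg
  have h1 : (stabilizer (↥H) B₀).index = r := by
    rw [index_stabilizer, horb, ← Nat.card_coe_set_eq]
    exact hr α
  rw [← h1]
  exact Subgroup.index_dvd_card _

/-- The order of a point stabilizer of `G` divides `[G : X]` times the order of
the corresponding point stabilizer of a normal subgroup `X`. -/
private lemma card_pointStab_dvd' {P : Type*} [Finite P] (G X : Subgroup (Equiv.Perm P))
    (hXG : X ≤ G) (hXnorm : ∀ g ∈ G, ∀ x ∈ X, g * x * g⁻¹ ∈ X) (α : P) :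
    Nat.card (pointStab G α) ∣ X.relIndex G * Nat.card (pointStab X α) := by
  classical
  set st := MulAction.stabilizer (Equiv.Perm P) α with hst
  set H : Subgroup (Equiv.Perm P) := G ⊓ st with hH
  have hHG : H ≤ G := inf_le_left
  set X' := X.subgroupOf G with hX'
  set H' := H.subgroupOf G with hH'
  have hnorm : X'.Normal := by
    constructor
    intro x hx g
    have h := hXnorm g g.2 x (by simpa [hX', Subgroup.mem_subgroupOf] using hx)
    simpa [hX', Subgroup.mem_subgroupOf] using h
  have h1 : X'.relIndex H' ∣ X.relIndex G :=
    Subgroup.relIndex_dvd_index_of_normal X' H'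
  have h2 : X'.relIndex H' * Nat.card ↥(X' ⊓ H') = Nat.card H' := by
    have e1 : Nat.card ↥(X'.subgroupOf H') = Nat.card ↥(X' ⊓ H') := by
      rw [← Subgroup.inf_subgroupOf_right]
      exact Nat.card_congr (Subgroup.subgroupOfEquivOfLe inf_le_right).toEquiv
    rw [Subgroup.relIndex, ← e1]
    exact Subgroup.index_mul_card _
  have h3 : Nat.card H' = Nat.card H :=
    Nat.card_congr (Subgroup.subgroupOfEquivOfLe hHG).toEquiv
  have h4 : X' ⊓ H' = (X ⊓ H).subgroupOf G := by
    ext g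
    simp [hX', hH', Subgroup.mem_subgroupOf]
  have h5 : X ⊓ H = pointStab X α := by
    rw [hH, pointStab, ← inf_assoc, inf_of_le_left hXG, hst]
  have h6 : Nat.card ↥((X ⊓ H).subgroupOf G) = Nat.card ↥(X ⊓ H) :=
    Nat.card_congr (Subgroup.subgroupOfEquivOfLe (le_trans inf_le_left hXG)).toEquiv
  have key : Nat.card (pointStab G α) = X'.relIndex H' * Nat.card (pointStab X α) := by
    rw [show pointStab G α = H from rfl, ← h3, ← h2, h4, h6, h5]
  rw [key]
  exact mul_dvd_mul_right h1 _

/-- Number theoretic helper: from `ordProj[p] r ∣ 2` and `r ∣ 2tm` deduce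
`r ∣ 2t · ordCompl[p] m`. -/
private lemma nt_helper' {p r t m : ℕ} (hp : p.Prime) (hr0 : 0 < r)
    (ha : ordProj[p] r ∣ 2) (hdvd : r ∣ 2 * t * m) : r ∣ 2 * t * ordCompl[p] m := by
  have hrc : ordCompl[p] r ∣ ordCompl[p] (2 * t) * ordCompl[p] m := by
    have h1 : ordCompl[p] r ∣ 2 * t * m := (Nat.ordCompl_dvd r p).trans hdvd
    have hcop : Nat.Coprime (ordCompl[p] r) (ordProj[p] (2 * t * m)) :=
      Nat.Coprime.pow_right _
        (Nat.coprime_comm.mp ((Nat.Prime.coprime_iff_not_dvd hp).mpr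
          (Nat.not_dvd_ordCompl hp hr0.ne')))
    have h3 : ordCompl[p] r ∣ ordProj[p] (2 * t * m) * ordCompl[p] (2 * t * m) := by
      rw [Nat.ordProj_mul_ordCompl_eq_self]; exact h1
    have h4 := hcop.dvd_of_dvd_mul_left h3
    rwa [Nat.ordCompl_mul] at h4
  rcases eq_or_ne p 2 with hp2 | hp2
  · subst hp2
    rcases Nat.eq_zero_or_pos t with rfl | ht
    · simpa using hdvd
    have h2t : 1 ≤ (2 * t).factorization 2 :=
      Nat.Prime.factorization_pos_of_dvd hp (by positivity) (dvd_mul_right 2 t)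
    have hdiv : 2 * ordCompl[2] (2 * t) ∣ 2 * t := by
      conv_rhs => rw [← Nat.ordProj_mul_ordCompl_eq_self (2 * t) 2]
      exact mul_dvd_mul (by have := pow_dvd_pow 2 h2t; rwa [pow_one] at this) dvd_rfl
    have hr' : r ∣ 2 * (ordCompl[2] (2 * t) * ordCompl[2] m) := by
      have h5 := mul_dvd_mul ha hrc
      rwa [Nat.ordProj_mul_ordCompl_eq_self] at h5
    calc r ∣ 2 * (ordCompl[2] (2 * t) * ordCompl[2] m) := hr'
      _ = (2 * ordCompl[2] (2 * t)) * ordCompl[2] m := by ring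
      _ ∣ 2 * t * ordCompl[2] m := mul_dvd_mul_right hdiv _
  · have hane : ordProj[p] r = 1 := by
      by_contra h
      have he : 0 < r.factorization p :=
        Nat.pos_of_ne_zero (fun h0 => h (by rw [h0, pow_zero]))
      have hpd : p ∣ 2 := dvd_trans (dvd_pow_self p he.ne') ha
      exact hp2 ((Nat.prime_dvd_prime_iff_eq hp Nat.prime_two).mp hpd)
    have hreq : r = ordCompl[p] r := by
      conv_lhs => rw [← Nat.ordProj_mul_ordCompl_eq_self r p]
      rw [hane, one_mul]
    calc r = ordCompl[p] r := hreq
      _ ∣ ordCompl[p] (2 * t) * ordCompl[p] m := hrc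
      _ ∣ 2 * t * ordCompl[p] m := mul_dvd_mul_right (Nat.ordCompl_dvd _ _) _

end AuxLemmas

/-- Lemma 2.4 of the paper: bounds and divisibility conditions for a flag-transitive
group `G` of automorphisms of a `2`-`(v, k, 2)` design with a point-transitive normal
subgroup `X ≅ PSL(n, q)`, `q = p^f`, `d = gcd(n, q-1)`, `[G : X] ∣ 2df`. -/
theorem psl_socle_bounds (v k r : ℕ) (P : Type*) (Bs : Set (Set P))
    (hD : IsTwoDesign v k 2 P Bs) (hk : 2 < k) (hkv : k < v)
    (hr : HasReplication Bs r)
    (G X : Subgroup (Equiv.Perm P)) (hGaut : IsAutomGroup G Bs)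
    (hft : IsFlagTransitive G Bs)
    (hXG : X ≤ G) (hXnorm : ∀ g ∈ G, ∀ x ∈ X, g * x * g⁻¹ ∈ X)
    (hXtrans : ∀ x y : P, ∃ g ∈ X, g x = y)
    (n p f : ℕ) (hn : 3 ≤ n) [hp : Fact p.Prime] (hf : 0 < f)
    (hX : Nonempty (X ≃* Matrix.ProjectiveSpecialLinearGroup (Fin n) (GaloisField p f)))
    (d : ℕ) (hd : d = Nat.gcd n (p ^ f - 1))
    (hindex : X.relIndex G ∣ 2 * d * f)
    (α : P) :
    Nat.card X < 2 * (d * f) ^ 2 * Nat.card (pointStab X α) ^ 3 ∧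
    r ∣ 2 * d * f * Nat.card (pointStab X α) ∧
    (p ∣ v →
      ordProj[p] r ∣ 2 ∧
      r ∣ 2 * d * f * ordCompl[p] (Nat.card (pointStab X α)) ∧
      Nat.card X <
        2 * (d * f) ^ 2 * ordCompl[p] (Nat.card (pointStab X α)) ^ 2 *
          Nat.card (pointStab X α)) := by
  classical
  have hv : Nat.card P = v := hD.1
  have hv4 : 4 ≤ v := by omega
  have hfinP : Finite P := by
    have h0 : 0 < Nat.card P := by omega
    exact (Nat.card_pos_iff.mp h0).2
  obtain ⟨hcount1, hr2, h2v⟩ := by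
    letI : Fintype P := Fintype.ofFinite P
    exact design_facts' v k r Bs hD hk hkv hr
  set m := Nat.card (pointStab X α) with hm
  have hm0 : 0 < m := by
    rw [hm]
    exact Nat.card_pos_iff.mpr ⟨⟨⟨1, (pointStab X α).one_mem⟩⟩, inferInstance⟩
  have hd0 : 0 < d := by
    rw [hd]
    exact Nat.gcd_pos_of_pos_left _ (by omega)
  -- existence of a block through α
  have hntr : Nontrivial P := by
    letI : Fintype P := Fintype.ofFinite P
    refine Fintype.one_lt_card_iff_nontrivial.mp ?_
    have : Nat.card P = Fintype.card P := Nat.card_eq_fintype_card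
    omega
  obtain ⟨β, hβα⟩ := exists_ne α
  have hBne : Nonempty {B : Set P | B ∈ Bs ∧ α ∈ B ∧ β ∈ B} := by
    refine (Nat.card_pos_iff.mp ?_).1
    rw [hD.2.2 α β (fun h => hβα h.symm)]
    omega
  obtain ⟨⟨B₀, hB₀, hαB₀, -⟩⟩ := hBne
  -- part (ii)
  have hrdvd : r ∣ 2 * d * f * m := by
    calc r ∣ Nat.card (pointStab G α) :=
          repl_dvd_card_pointStab' Bs r hr G hGaut hft α B₀ hB₀ hαB₀
      _ ∣ X.relIndex G * m := card_pointStab_dvd' G X hXG hXnorm α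
      _ ∣ 2 * d * f * m := mul_dvd_mul_right hindex m
  have hcardX : Nat.card X = v * m := by
    rw [card_of_transitive' X hXtrans α, hv]
  -- generic inequality
  have hineq : ∀ R : ℕ, r ∣ 2 * d * f * R → 0 < R →
      v * m < 2 * (d * f) ^ 2 * R ^ 2 * m := by
    intro R hdvdR hR0
    have hRpos : 0 < 2 * d * f * R := by positivity
    have hrle : r ≤ 2 * d * f * R := Nat.le_of_dvd hRpos hdvdR
    have h1 : r ^ 2 ≤ (2 * d * f * R) ^ 2 := Nat.pow_le_pow_left hrle 2
    have h2 : (2 * d * f * R) ^ 2 = 4 * ((d * f) ^ 2 * R ^ 2) := by ring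
    have h4 : v < 2 * ((d * f) ^ 2 * R ^ 2) := by omega
    calc v * m < 2 * ((d * f) ^ 2 * R ^ 2) * m := (Nat.mul_lt_mul_right hm0).mpr h4
      _ = 2 * (d * f) ^ 2 * R ^ 2 * m := by ring
  refine ⟨?_, hrdvd, ?_⟩
  · have h := hineq m hrdvd hm0
    rw [hcardX]
    calc v * m < 2 * (d * f) ^ 2 * m ^ 2 * m := h
      _ = 2 * (d * f) ^ 2 * m ^ 3 := by ring
  · intro hpv
    have hrdvd2 : r ∣ 2 * (v - 1) := ⟨k - 1, hcount1.symm⟩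
    have hpv1 : ¬ p ∣ (v - 1) := by
      intro h
      have h1 : p ∣ v - (v - 1) := Nat.dvd_sub hpv h
      rw [show v - (v - 1) = 1 by omega] at h1
      exact hp.out.one_lt.ne' (Nat.dvd_one.mp h1)
    have hordp : ordProj[p] r ∣ 2 := by
      have h1 : ordProj[p] r ∣ 2 * (v - 1) := (Nat.ordProj_dvd r p).trans hrdvd2
      have hcop : Nat.Coprime (ordProj[p] r) (v - 1) :=
        Nat.Coprime.pow_left _ ((Nat.Prime.coprime_iff_not_dvd hp.out).mpr hpv1)
      exact hcop.dvd_of_dvd_mul_right h1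
    have hrdvd3 : r ∣ 2 * d * f * ordCompl[p] m := by
      have h1 : r ∣ 2 * (d * f) * m := by rwa [← mul_assoc]
      have h2 := nt_helper' (t := d * f) hp.out (by omega) hordp h1
      rwa [← mul_assoc] at h2
    refine ⟨hordp, hrdvd3, ?_⟩
    have hmc0 : 0 < ordCompl[p] m := Nat.ordCompl_pos p hm0.ne'
    have h := hineq (ordCompl[p] m) hrdvd3 hmc0
    rw [hcardX]
    exact h
end

section
/- Let D be a nontrivial 2-(v,k,2) design with replication number r, let G ≤ Aut(D) be flag-transitive, and let X be a normal subgroup of G that is isomorphic to PSL(n,q) (n ≥ 3, q = p^f) and acts transitively on the point set P; set d = gcd(n,q−1) and suppose the index [G:X] divides 2df. Let α and β be distinct points of D and let H be a subgroup of G_{α,β}, the subgroup of G fixing both α and β. Then r·|H| divides 4df|X_α|. -/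
open scoped MatrixGroups

/-- Lemma 2.5 of the paper: if `H` is a subgroup of the two-point stabilizer
`G_{α,β}`, then `r · |H|` divides `4 d f |X_α|`. -/
theorem psl_socle_two_point_div (v k r : ℕ) (P : Type*) (Bs : Set (Set P))
    (hD : IsTwoDesign v k 2 P Bs) (hk : 2 < k) (hkv : k < v)
    (hr : HasReplication Bs r)
    (G X : Subgroup (Equiv.Perm P)) (hGaut : IsAutomGroup G Bs)
    (hft : IsFlagTransitive G Bs)
    (hXG : X ≤ G) (hXnorm : ∀ g ∈ G, ∀ x ∈ X, g * x * g⁻¹ ∈ X)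
    (hXtrans : ∀ x y : P, ∃ g ∈ X, g x = y)
    (n p f : ℕ) (hn : 3 ≤ n) [hp : Fact p.Prime] (hf : 0 < f)
    (hX : Nonempty (X ≃* Matrix.ProjectiveSpecialLinearGroup (Fin n) (GaloisField p f)))
    (d : ℕ) (hd : d = Nat.gcd n (p ^ f - 1))
    (hindex : X.relIndex G ∣ 2 * d * f)
    (α β : P) (hαβ : α ≠ β)
    (H : Subgroup (Equiv.Perm P)) (hHG : H ≤ G)
    (hHfix : ∀ h ∈ H, h α = α ∧ h β = β) :
    r * Nat.card H ∣ 4 * d * f * Nat.card (pointStab X α) := by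
  classical
  obtain ⟨hcardP, hblk, hlam⟩ := hD
  have hPfin : Finite P := Nat.finite_of_card_ne_zero (by omega)
  haveI : Fintype P := Fintype.ofFinite P
  set Gα : Subgroup (Equiv.Perm P) := pointStab G α with hGαdef
  set Gαβ : Subgroup (Equiv.Perm P) := Gα ⊓ MulAction.stabilizer (Equiv.Perm P) β with hGαβdef
  have hGαG : Gα ≤ G := inf_le_left
  have hHle : H ≤ Gαβ := by
    intro h hh
    obtain ⟨h1, h2⟩ := hHfix h hh
    exact ⟨⟨hHG hh, h1⟩, h2⟩
  -- the orbit of β under Gα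
  set Δ : Set P := MulAction.orbit Gα β with hΔdef
  have hβΔ : β ∈ Δ := MulAction.mem_orbit_self β
  have hΔne : ∀ γ ∈ Δ, γ ≠ α := by
    rintro γ ⟨g, rfl⟩ hγ
    have hgα : (g : Equiv.Perm P) α = α := g.2.2
    have : (g : Equiv.Perm P) β = (g : Equiv.Perm P) α := by
      rw [hgα]; exact hγ
    exact hαβ ((g : Equiv.Perm P).injective this).symm
  -- Gα-invariance of Δ
  have hΔinv : ∀ g ∈ Gα, ∀ x ∈ Δ, (g : Equiv.Perm P) x ∈ Δ := by
    rintro g hg x ⟨h, rfl⟩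
    exact ⟨(⟨g, hg⟩ : Gα) * h, rfl⟩
  -- finsets
  set S : Finset (Set P) := (Set.toFinite {B : Set P | B ∈ Bs ∧ α ∈ B}).toFinset with hSdef
  set Δf : Finset P := (Set.toFinite Δ).toFinset with hΔfdef
  have hScard : S.card = r := by
    have := hr α
    rw [Nat.card_coe_set_eq, Set.ncard_eq_toFinset_card _ (Set.toFinite _)] at this
    exact this
  have hmemS : ∀ B : Set P, B ∈ S ↔ B ∈ Bs ∧ α ∈ B := by
    intro B; rw [hSdef, Set.Finite.mem_toFinset]; rfl
  have hmemΔf : ∀ x : P, x ∈ Δf ↔ x ∈ Δ := by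
    intro x; rw [hΔfdef, Set.Finite.mem_toFinset]
  -- double counting
  have hcol : ∀ γ ∈ Δf, (S.filter (fun B => γ ∈ B)).card = 2 := by
    intro γ hγ
    have hγΔ : γ ∈ Δ := (hmemΔf γ).mp hγ
    have hne : α ≠ γ := fun h => hΔne γ hγΔ h.symm
    have h2 := hlam α γ hne
    rw [Nat.card_coe_set_eq, Set.ncard_eq_toFinset_card _ (Set.toFinite _)] at h2
    rw [← h2]
    congr 1
    ext B
    simp only [Finset.mem_filter, hmemS, Set.Finite.mem_toFinset, Set.mem_setOf_eq]
    tauto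
  have hdouble : ∑ B ∈ S, (Δf.filter (fun γ => γ ∈ B)).card = 2 * Δf.card := by
    calc ∑ B ∈ S, (Δf.filter (fun γ => γ ∈ B)).card
        = ∑ B ∈ S, ∑ γ ∈ Δf, if γ ∈ B then 1 else 0 :=
          Finset.sum_congr rfl fun B _ => Finset.card_filter _ _
      _ = ∑ γ ∈ Δf, ∑ B ∈ S, if γ ∈ B then 1 else 0 := Finset.sum_comm
      _ = ∑ γ ∈ Δf, (S.filter (fun B => γ ∈ B)).card :=
          Finset.sum_congr rfl fun γ _ => (Finset.card_filter _ _).symm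
      _ = ∑ γ ∈ Δf, 2 := Finset.sum_congr rfl hcol
      _ = 2 * Δf.card := by rw [Finset.sum_const]; ring
  -- constancy across blocks through α
  have hconst : ∀ B₁ ∈ S, ∀ B₂ ∈ S,
      (Δf.filter (fun γ => γ ∈ B₁)).card = (Δf.filter (fun γ => γ ∈ B₂)).card := by
    intro B₁ h1 B₂ h2
    obtain ⟨hB1, hα1⟩ := (hmemS B₁).mp h1
    obtain ⟨hB2, hα2⟩ := (hmemS B₂).mp h2
    obtain ⟨g, hgG, hgB, hgα⟩ := hft B₁ hB1 B₂ hB2 α hα1 α hα2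
    have hgGα : g ∈ Gα := ⟨hgG, hgα⟩
    have hgGαi : g⁻¹ ∈ Gα := inv_mem hgGα
    have himg : Finset.image g (Δf.filter (fun γ => γ ∈ B₁)) = Δf.filter (fun γ => γ ∈ B₂) := by
      ext γ
      simp only [Finset.mem_image, Finset.mem_filter, hmemΔf]
      constructor
      · rintro ⟨x, ⟨hxΔ, hxB⟩, rfl⟩
        exact ⟨hΔinv g hgGα x hxΔ, hgB ▸ Set.mem_image_of_mem g hxB⟩
      · rintro ⟨hγΔ, hγB⟩
        refine ⟨g⁻¹ γ, ⟨hΔinv g⁻¹ hgGαi γ hγΔ, ?_⟩, Equiv.apply_symm_apply g γ⟩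
        rw [← hgB] at hγB
        obtain ⟨x, hx, rfl⟩ := hγB
        simpa using hx
    calc (Δf.filter (fun γ => γ ∈ B₁)).card
        = (Finset.image g (Δf.filter (fun γ => γ ∈ B₁))).card :=
          (Finset.card_image_of_injective _ g.injective).symm
      _ = _ := by rw [himg]
  -- there is a block through α and β
  obtain ⟨B₀, hB₀s, hB₀α, hB₀β⟩ : ∃ B₀, B₀ ∈ Bs ∧ α ∈ B₀ ∧ β ∈ B₀ := by
    have h2 := hlam α β hαβ
    have : ({B : Set P | B ∈ Bs ∧ α ∈ B ∧ β ∈ B}).Nonempty := by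
      rw [← Set.ncard_pos (Set.toFinite _), ← Nat.card_coe_set_eq, h2]
      omega
    obtain ⟨B₀, hB₀⟩ := this
    exact ⟨B₀, hB₀.1, hB₀.2.1, hB₀.2.2⟩
  have hB₀S : B₀ ∈ S := (hmemS B₀).mpr ⟨hB₀s, hB₀α⟩
  set c : ℕ := (Δf.filter (fun γ => γ ∈ B₀)).card with hcdef
  have hsum : ∑ B ∈ S, (Δf.filter (fun γ => γ ∈ B)).card = r * c := by
    rw [Finset.sum_congr rfl (fun B hB => hconst B hB B₀ hB₀S), Finset.sum_const, hScard,
      smul_eq_mul]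
  have hrdvd : r ∣ 2 * Δf.card := ⟨c, by rw [← hdouble, hsum]⟩
  -- orbit stabilizer
  haveI : Fintype ↥Gα := Fintype.ofFinite _
  haveI : Fintype (MulAction.orbit Gα β) := Fintype.ofFinite _
  haveI : Fintype (MulAction.stabilizer Gα β) := Fintype.ofFinite _
  have horbstab := MulAction.card_orbit_mul_card_stabilizer_eq_card_group (G := ↥Gα) β
  have hΔcard : Fintype.card (MulAction.orbit Gα β) = Δf.card := by
    rw [← Nat.card_eq_fintype_card, Nat.card_coe_set_eq,
      Set.ncard_eq_toFinset_card _ (Set.toFinite _)]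
  have hstabcard : Fintype.card (MulAction.stabilizer Gα β) = Nat.card Gαβ := by
    rw [← Nat.card_eq_fintype_card]
    refine Nat.card_congr ⟨fun x => ⟨x.1.1, x.1.2, x.2⟩, fun y => ⟨⟨y.1, y.2.1⟩, y.2.2⟩,
      fun x => rfl, fun y => rfl⟩
  have hOS : Δf.card * Nat.card Gαβ = Nat.card Gα := by
    rw [← hΔcard, ← hstabcard, horbstab, Nat.card_eq_fintype_card]
  -- step 1 conclusion
  have step1 : r * Nat.card H ∣ 2 * Nat.card Gα := by
    calc r * Nat.card H ∣ r * Nat.card Gαβ :=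
          mul_dvd_mul_left r (Subgroup.card_dvd_of_le hHle)
      _ ∣ (2 * Δf.card) * Nat.card Gαβ := mul_dvd_mul_right hrdvd _
      _ = 2 * Nat.card Gα := by rw [mul_assoc, hOS]
  -- step 2 : Nat.card Gα ∣ (2*d*f) * Nat.card (pointStab X α)
  have step2 : Nat.card Gα ∣ (2 * d * f) * Nat.card (pointStab X α) := by
    set K : Subgroup ↥G := X.subgroupOf G with hKdef
    set L : Subgroup ↥G := Gα.subgroupOf G with hLdef
    haveI : K.Normal := by
      constructor
      rintro ⟨x, hxG⟩ hx ⟨g, hgG⟩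
      rw [hKdef, Subgroup.mem_subgroupOf] at hx ⊢
      exact hXnorm g hgG x hx
    have h1 : K.relIndex L ∣ K.index := Subgroup.relIndex_dvd_index_of_normal K L
    have h2 : K.index = X.relIndex G := rfl
    have h3 : (K.subgroupOf L).index * Nat.card (K.subgroupOf L) = Nat.card L :=
      Subgroup.index_mul_card _
    have h4 : Nat.card L = Nat.card Gα :=
      Nat.card_congr (Subgroup.subgroupOfEquivOfLe hGαG).toEquiv
    have h5 : Nat.card ↥(K.subgroupOf L) = Nat.card ↥(pointStab X α) := by
      refine Nat.card_congr ⟨fun x => ⟨x.1.1.1, ?_, ?_⟩, fun y => ⟨⟨⟨y.1, hXG y.2.1⟩, ?_⟩, ?_⟩,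
        fun x => rfl, fun y => rfl⟩
      · exact (Subgroup.mem_subgroupOf).mp x.2
      · exact ((Subgroup.mem_subgroupOf).mp x.1.2).2
      · exact Subgroup.mem_subgroupOf.mpr ⟨hXG y.2.1, y.2.2⟩
      · exact Subgroup.mem_subgroupOf.mpr y.2.1
    have : Nat.card Gα = (K.relIndex L) * Nat.card ↥(pointStab X α) := by
      rw [← h4, ← h3, h5]; rfl
    have h1' : K.relIndex L ∣ X.relIndex G := h2 ▸ h1
    rw [this]
    exact mul_dvd_mul (h1'.trans hindex) dvd_rfl
  calc r * Nat.card H ∣ 2 * Nat.card Gα := step1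
    _ ∣ 2 * ((2 * d * f) * Nat.card ↥(pointStab X α)) := mul_dvd_mul_left 2 step2
    _ = 4 * d * f * Nat.card ↥(pointStab X α) := by ring
end

section
/- Let D be a nontrivial 2-(v,k,2) design with b blocks and replication number r, and let G ≤ Aut(D) be flag-transitive and leave invariant a partition C of the point set P into y parts each of size x, where 1 < x < v. Then v = x², y = x, k = x + 2, r = 2x − 2, b = 2x²(x−1)/(x+2), every nonempty intersection of a block with a part of C has size 2, and x + 2 divides 24 with x even and x ≥ 4; consequently x ∈ {4, 6, 10, 22}. -/
/-- `C` is a partition of `P` into nonempty parts. -/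
def IsPartitionOn (P : Type*) (C : Set (Set P)) : Prop :=
  (∀ Δ ∈ C, Δ.Nonempty) ∧ ∀ x : P, ∃! Δ : Set P, Δ ∈ C ∧ x ∈ Δ

/-- `C` is a `G`-invariant partition of the point set. -/
def IsInvariantPartition {P : Type*} (G : Subgroup (Equiv.Perm P)) (C : Set (Set P)) : Prop :=
  IsPartitionOn P C ∧ ∀ g ∈ G, ∀ Δ ∈ C, (⇑g) '' Δ ∈ C

open scoped Classical in
/-- Fisher-type inequality: in a `2`-design with `λ = 2` and replication number
`r ≥ 3`, the number of points is at most the number of blocks. -/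
lemma fisher_aux (P : Type*) [Fintype P] (tB : Finset (Set P)) (v b r : ℕ)
    (hne : Nonempty P) (hv : Fintype.card P = v) (hb : tB.card = b) (hr3 : 3 ≤ r)
    (hrb : ∀ p : P, (tB.filter (fun B => p ∈ B)).card = r)
    (hpair : ∀ p q : P, p ≠ q → (tB.filter (fun B => p ∈ B ∧ q ∈ B)).card = 2) :
    v ≤ b := by
  classical
  set M : P → (↥tB → ℚ) := fun p B => if p ∈ (B : Set P) then 1 else 0 with hM
  have inner : ∀ p q : P, ∑ B : ↥tB, M p B * M q B = if p = q then (r:ℚ) else 2 := by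
    intro p q
    have h1 : ∑ B : ↥tB, M p B * M q B
        = ∑ B ∈ tB, (if p ∈ B then (1:ℚ) else 0) * (if q ∈ B then 1 else 0) :=
      Finset.sum_coe_sort tB (fun B => (if p ∈ B then (1:ℚ) else 0) * (if q ∈ B then 1 else 0))
    rw [h1]
    have h2 : ∀ B ∈ tB, (if p ∈ B then (1:ℚ) else 0) * (if q ∈ B then 1 else 0)
        = if p ∈ B ∧ q ∈ B then (1:ℚ) else 0 := by
      intro B _; split_ifs with h1' h2' h3' <;> simp_all
    rw [Finset.sum_congr rfl h2, Finset.sum_boole]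
    by_cases hpq : p = q
    · subst hpq
      rw [if_pos rfl]
      have h3 : (tB.filter (fun x => p ∈ x ∧ p ∈ x)) = tB.filter (fun x => p ∈ x) := by
        ext B; simp
      rw [h3]
      exact_mod_cast hrb p
    · rw [if_neg hpq]
      exact_mod_cast hpair p q hpq
  have hLI : LinearIndependent ℚ M := by
    rw [Fintype.linearIndependent_iff]
    intro g hg
    have key : ∀ q : P, g q * ((r:ℚ) - 2) + 2 * ∑ a, g a = 0 := by
      intro q
      have h0 : ∑ B : ↥tB, (∑ a, g a • M a) B * M q B = 0 := by rw [hg]; simp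
      have h1 : ∑ B : ↥tB, (∑ a, g a • M a) B * M q B
          = ∑ a, g a * (∑ B : ↥tB, M a B * M q B) := by
        simp_rw [Finset.sum_apply, Pi.smul_apply, smul_eq_mul, Finset.sum_mul]
        rw [Finset.sum_comm]
        simp_rw [mul_assoc, ← Finset.mul_sum]
      rw [h1] at h0
      simp_rw [inner] at h0
      have h2 : ∀ a : P, g a * (if a = q then (r:ℚ) else 2)
          = (if a = q then g a * ((r:ℚ) - 2) else 0) + g a * 2 := by
        intro a; split_ifs <;> ring
      rw [Finset.sum_congr rfl (fun a _ => h2 a), Finset.sum_add_distrib,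
        Finset.sum_ite_eq' Finset.univ q (fun a => g a * ((r:ℚ) - 2)),
        if_pos (Finset.mem_univ q), ← Finset.sum_mul] at h0
      linarith [h0]
    have hS : ∑ a, g a = 0 := by
      have hsum : ∑ q, (g q * ((r:ℚ) - 2) + 2 * ∑ a, g a) = 0 :=
        Finset.sum_eq_zero (fun q _ => key q)
      rw [Finset.sum_add_distrib, ← Finset.sum_mul, Finset.sum_const, Finset.card_univ] at hsum
      have hvpos : 0 < Fintype.card P := Fintype.card_pos_iff.mpr hne
      have : (∑ a, g a) * ((r:ℚ) - 2 + 2 * Fintype.card P) = 0 := by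
        ring_nf at hsum ⊢
        linarith [hsum]
      rcases mul_eq_zero.mp this with h | h
      · exact h
      · exfalso
        have : (3:ℚ) ≤ (r:ℚ) := by exact_mod_cast hr3
        have : (1:ℚ) ≤ (Fintype.card P : ℚ) := by exact_mod_cast hvpos
        linarith
    intro p
    have := key p
    rw [hS] at this
    have hr2 : (r:ℚ) - 2 ≠ 0 := by
      have : (3:ℚ) ≤ (r:ℚ) := by exact_mod_cast hr3
      intro h; linarith
    have := mul_eq_zero.mp (by linarith : g p * ((r:ℚ) - 2) = 0)
    tauto
  have hcard := hLI.fintype_card_le_finrank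
  rwa [Module.finrank_pi, Fintype.card_coe, hv, hb] at hcard

set_option maxHeartbeats 1000000 in
/-- The purely arithmetic endgame of the proof of `imprimitive_parameters`. -/
lemma arith_endgame (v k b r x y c : ℕ) (hk : 2 < k) (hkv : k < v) (hx : 1 < x) (hxv : x < v)
    (h1 : b * k = v * r) (h2 : r * (k - 1) = (v - 1) * 2) (h3 : r * (c - 1) = (x - 1) * 2)
    (h4 : v = y * x) (h5 : v ≤ b) (hck : c ≤ k) :
    v = x ^ 2 ∧ y = x ∧ k = x + 2 ∧ r = 2 * x - 2 ∧
    b * (x + 2) = 2 * x ^ 2 * (x - 1) ∧ c = 2 ∧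
    (x + 2) ∣ 24 ∧ Even x ∧ 4 ≤ x ∧ (x = 4 ∨ x = 6 ∨ x = 10 ∨ x = 22) := by
  have hv4 : 4 ≤ v := by omega
  have hy2 : 2 ≤ y := by
    rcases y with _ | _ | y
    · simp at h4; omega
    · simp at h4; omega
    · omega
  have hc2 : 2 ≤ c := by
    by_contra h
    push_neg at h
    interval_cases c <;> simp_all <;> omega
  have hr1 : 1 ≤ r := by
    rcases Nat.eq_zero_or_pos r with rfl | h
    · simp at h2; omega
    · exact h
  have hr3 : 3 ≤ r := by
    by_contra h
    push_neg at h
    have : r * (k - 1) ≤ 2 * (k - 1) := Nat.mul_le_mul_right _ (by omega)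
    omega
  have hkr : k ≤ r := by
    have hbk : v * k ≤ b * k := Nat.mul_le_mul_right _ h5
    rw [h1] at hbk
    exact Nat.le_of_mul_le_mul_left hbk (by omega)
  -- integer versions
  have e2 : (r : ℤ) * ((k : ℤ) - 1) = ((v : ℤ) - 1) * 2 := by
    zify [show 1 ≤ k by omega, show 1 ≤ v by omega] at h2; exact h2
  have e3 : (r : ℤ) * ((c : ℤ) - 1) = ((x : ℤ) - 1) * 2 := by
    zify [show 1 ≤ c by omega, show 1 ≤ x by omega] at h3; exact h3
  have e4 : (v : ℤ) = (y : ℤ) * (x : ℤ) := by exact_mod_cast h4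
  have hkrZ : (k : ℤ) ≤ (r : ℤ) := by exact_mod_cast hkr
  have hr1Z : (1 : ℤ) ≤ (r : ℤ) := by exact_mod_cast hr1
  have hx2Z : (2 : ℤ) ≤ (x : ℤ) := by exact_mod_cast hx
  have hy2Z : (2 : ℤ) ≤ (y : ℤ) := by exact_mod_cast hy2
  have hk3Z : (3 : ℤ) ≤ (k : ℤ) := by exact_mod_cast hk
  set s : ℤ := (k : ℤ) - 1 - (y : ℤ) * ((c : ℤ) - 1) with hs
  have hS : (r : ℤ) * s = 2 * ((y : ℤ) - 1) := by
    rw [hs]; linear_combination e2 - (y : ℤ) * e3 + 2 * e4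
  have hS1 : 1 ≤ s := by nlinarith [hS, hr1Z, hy2Z]
  have hKC : (k : ℤ) - (c : ℤ) = (x : ℤ) * s := by
    have hmul : (r : ℤ) * ((k : ℤ) - (c : ℤ)) = (r : ℤ) * ((x : ℤ) * s) := by
      linear_combination e2 - e3 - (x : ℤ) * hS + 2 * e4
    exact mul_left_cancel₀ (by linarith : (r : ℤ) ≠ 0) hmul
  have hceq : c = 2 := by
    rcases Nat.lt_or_ge c 3 with h | h
    · omega
    · exfalso
      have hc3 : (3 : ℤ) ≤ (c : ℤ) := by exact_mod_cast h
      have h2r : (r : ℤ) * 2 ≤ (r : ℤ) * ((c : ℤ) - 1) :=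
        mul_le_mul_of_nonneg_left (by linarith) (by linarith)
      rw [e3] at h2r
      have hrx : (r : ℤ) ≤ (x : ℤ) - 1 := by linarith
      have hxs : (x : ℤ) * 1 ≤ (x : ℤ) * s := mul_le_mul_of_nonneg_left hS1 (by linarith)
      have hkx : (x : ℤ) + 3 ≤ (k : ℤ) := by linarith [hKC]
      linarith
  subst hceq
  have hrval : (r : ℤ) = 2 * (x : ℤ) - 2 := by
    have : ((2 : ℕ) : ℤ) - 1 = 1 := by norm_num
    rw [this, mul_one] at e3
    linarith
  have hkval : (k : ℤ) = (x : ℤ) * s + 2 := by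
    have : ((2 : ℕ) : ℤ) = 2 := by norm_num
    rw [this] at hKC
    linarith
  have hSone : s = 1 := by
    by_contra h
    have h2s : 2 ≤ s := by omega
    have : (x : ℤ) * 2 ≤ (x : ℤ) * s := mul_le_mul_of_nonneg_left h2s (by linarith)
    linarith [hkval, hrval, hkrZ]
  have hyval : (y : ℤ) = (x : ℤ) := by
    have h2y : 2 * (y : ℤ) = 2 * (x : ℤ) := by
      rw [hSone] at hS
      linarith [hrval]
    linarith
  have hy : y = x := by exact_mod_cast hyval
  have hkx : k = x + 2 := by
    have : (k : ℤ) = (x : ℤ) + 2 := by rw [hSone] at hkval; linarith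
    exact_mod_cast this
  have hx4 : 4 ≤ x := by
    have : (4 : ℤ) ≤ (x : ℤ) := by
      rw [hkx] at hkrZ
      push_cast at hkrZ
      linarith [hrval]
    exact_mod_cast this
  have hvx : v = x ^ 2 := by rw [h4, hy, pow_two]
  have hrnat : r = 2 * x - 2 := by
    have : r + 2 = 2 * x := by exact_mod_cast (show (r : ℤ) + 2 = 2 * (x : ℤ) by linarith)
    omega
  have hbx : b * (x + 2) = 2 * x ^ 2 * (x - 1) := by
    have hprod : ∀ n : ℕ, 1 ≤ n → n ^ 2 * (2 * n - 2) = 2 * n ^ 2 * (n - 1) := by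
      intro n hn
      obtain ⟨m, rfl⟩ : ∃ m, n = m + 1 := ⟨n - 1, by omega⟩
      simp only [show 2 * (m + 1) - 2 = 2 * m from by omega, Nat.add_sub_cancel]
      ring
    calc b * (x + 2) = b * k := by rw [hkx]
      _ = v * r := h1
      _ = x ^ 2 * (2 * x - 2) := by rw [hvx, hrnat]
      _ = 2 * x ^ 2 * (x - 1) := hprod x (by omega)
  have hdvd : (x + 2) ∣ 24 := by
    have hbZ : (b : ℤ) * ((x : ℤ) + 2) = 2 * (x : ℤ) ^ 2 * ((x : ℤ) - 1) := by
      calc (b : ℤ) * ((x : ℤ) + 2) = ((b * (x + 2) : ℕ) : ℤ) := by push_cast; ring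
        _ = ((2 * x ^ 2 * (x - 1) : ℕ) : ℤ) := by rw [hbx]
        _ = 2 * (x : ℤ) ^ 2 * ((x : ℤ) - 1) := by
            push_cast [Nat.cast_sub (show 1 ≤ x by omega)]; ring
    have : ((x : ℤ) + 2) ∣ 24 := ⟨2 * (x : ℤ) ^ 2 - 6 * (x : ℤ) + 12 - (b : ℤ), by
      linear_combination hbZ⟩
    have h24 : ((x + 2 : ℕ) : ℤ) ∣ ((24 : ℕ) : ℤ) := by push_cast; exact this
    exact_mod_cast h24
  have hle : x + 2 ≤ 24 := Nat.le_of_dvd (by norm_num) hdvd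
  have hx22 : x ≤ 22 := by omega
  have hmem : x = 4 ∨ x = 6 ∨ x = 10 ∨ x = 22 := by
    interval_cases x <;> revert hdvd <;> decide
  refine ⟨hvx, hy, hkx, hrnat, hbx, rfl, hdvd, ?_, hx4, hmem⟩
  rcases hmem with rfl | rfl | rfl | rfl <;> decide

/-- Claim 1 in the proof of Theorem 1.1: if a flag-transitive group `G` of automorphisms
of a nontrivial `2`-`(v, k, 2)` design leaves invariant a partition of the point set into
`y` parts of size `x`, with `1 < x < v`, then `v = x²`, `y = x`, `k = x + 2`,
`r = 2x - 2`, `b = 2x²(x-1)/(x+2)`, every nonempty block-part intersection has size `2`,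
`x + 2` divides `24`, `x` is even, `x ≥ 4`, and hence `x ∈ {4, 6, 10, 22}`. -/
theorem imprimitive_parameters (v k b r x y : ℕ) (P : Type*) (Bs : Set (Set P))
    (hD : IsTwoDesign v k 2 P Bs) (hk : 2 < k) (hkv : k < v)
    (hb : Nat.card Bs = b) (hr : HasReplication Bs r)
    (G : Subgroup (Equiv.Perm P)) (hGaut : IsAutomGroup G Bs)
    (hft : IsFlagTransitive G Bs)
    (C : Set (Set P)) (hC : IsInvariantPartition G C)
    (hCy : Nat.card C = y) (hCx : ∀ Δ ∈ C, Nat.card Δ = x)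
    (hx1 : 1 < x) (hxv : x < v) :
    v = x ^ 2 ∧ y = x ∧ k = x + 2 ∧ r = 2 * x - 2 ∧
    b * (x + 2) = 2 * x ^ 2 * (x - 1) ∧
    (∀ B ∈ Bs, ∀ Δ ∈ C, (B ∩ Δ).Nonempty → Nat.card ↥(B ∩ Δ) = 2) ∧
    (x + 2) ∣ 24 ∧ Even x ∧ 4 ≤ x ∧ (x = 4 ∨ x = 6 ∨ x = 10 ∨ x = 22) := by
  classical
  obtain ⟨hvP, hBk, hlam⟩ := hD
  have hv4 : 4 ≤ v := by omega
  have hPf := Nat.card_pos_iff.mp (show 0 < Nat.card P by rw [hvP]; omega)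
  have hPfin : Finite P := hPf.2
  have hne : Nonempty P := hPf.1
  letI : Fintype P := Fintype.ofFinite P
  have hvF : Fintype.card P = v := by rw [← Nat.card_eq_fintype_card, hvP]
  set tB : Finset (Set P) := Bs.toFinset with htBdef
  have htBcard : tB.card = b := by
    rw [← hb, Nat.card_coe_set_eq, Set.ncard_eq_toFinset_card']
  have hrb : ∀ p : P, (tB.filter (fun B => p ∈ B)).card = r := by
    intro p
    have h2 : {B : Set P | B ∈ Bs ∧ p ∈ B}.toFinset = tB.filter (fun B => p ∈ B) := by
      ext B; simp [htBdef, Set.mem_toFinset]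
    have := hr p
    rwa [Nat.card_coe_set_eq, Set.ncard_eq_toFinset_card', h2] at this
  have hpair : ∀ p q : P, p ≠ q → (tB.filter (fun B => p ∈ B ∧ q ∈ B)).card = 2 := by
    intro p q hpq
    have h2 : {B : Set P | B ∈ Bs ∧ p ∈ B ∧ q ∈ B}.toFinset
        = tB.filter (fun B => p ∈ B ∧ q ∈ B) := by
      ext B; simp only [Finset.mem_filter, Set.mem_toFinset, Set.mem_setOf_eq, htBdef]
      try tauto
    have := hlam p q hpq
    rwa [Nat.card_coe_set_eq, Set.ncard_eq_toFinset_card', h2] at this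
  have hBsize : ∀ B ∈ tB, (Finset.univ.filter (fun p => p ∈ B)).card = k := by
    intro B hB
    have hBBs : B ∈ Bs := by rwa [htBdef, Set.mem_toFinset] at hB
    have := hBk B hBBs
    rw [Nat.card_coe_set_eq, Set.ncard_eq_toFinset_card'] at this
    rw [← this]
    congr 1
    ext p; simp [Set.mem_toFinset]
  -- (1) counting flags : b * k = v * r
  have hflags : b * k = v * r := by
    have key := Finset.card_mul_eq_card_mul (fun (B : Set P) (p : P) => p ∈ B)
        (s := tB) (t := Finset.univ) (m := k) (n := r)
        (fun B hB => by rw [Finset.bipartiteAbove]; exact hBsize B hB)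
        (fun p _ => by rw [Finset.bipartiteBelow]; exact hrb p)
    rwa [htBcard, Finset.card_univ, hvF] at key
  obtain ⟨α₀⟩ := hne
  -- (2) counting pairs through a point : r * (k - 1) = (v - 1) * 2
  have hcount2 : r * (k - 1) = (v - 1) * 2 := by
    have key := Finset.card_mul_eq_card_mul (fun (B : Set P) (p : P) => p ∈ B)
        (s := tB.filter (fun B => α₀ ∈ B)) (t := Finset.univ.erase α₀) (m := k - 1) (n := 2)
        ?_ ?_
    · rwa [hrb α₀, Finset.card_erase_of_mem (Finset.mem_univ _), Finset.card_univ, hvF] at key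
    · intro B hB
      rw [Finset.mem_filter] at hB
      rw [Finset.bipartiteAbove]
      have h1 : (Finset.univ.erase α₀).filter (fun p => p ∈ B)
          = (Finset.univ.filter (fun p => p ∈ B)).erase α₀ := by
        ext p
        simp only [Finset.mem_filter, Finset.mem_erase, Finset.mem_univ, true_and, and_true]
        try tauto
      rw [h1, Finset.card_erase_of_mem (by simp [hB.2]), hBsize B hB.1]
    · intro p hp
      rw [Finset.mem_erase] at hp
      rw [Finset.bipartiteBelow, Finset.filter_filter]
      exact hpair α₀ p (Ne.symm hp.1)
  have hr1 : 0 < r := by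
    rcases Nat.eq_zero_or_pos r with rfl | h
    · simp at hcount2; omega
    · exact h
  have hr3 : 3 ≤ r := by
    by_contra h
    push_neg at h
    have h2 : r * (k - 1) ≤ 2 * (k - 1) := Nat.mul_le_mul_right _ (by omega)
    omega
  -- the part containing α₀ and a block through α₀
  obtain ⟨Δ₀, ⟨hΔ₀C, hα₀Δ₀⟩, hΔ₀u⟩ := hC.1.2 α₀
  have hBne : (tB.filter (fun B => α₀ ∈ B)).Nonempty :=
    Finset.card_pos.mp (by rw [hrb α₀]; exact hr1)
  obtain ⟨B₀, hB₀mem⟩ := hBne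
  rw [Finset.mem_filter] at hB₀mem
  have hB₀Bs : B₀ ∈ Bs := by rw [htBdef, Set.mem_toFinset] at hB₀mem; exact hB₀mem.1
  have hα₀B₀ : α₀ ∈ B₀ := hB₀mem.2
  set c : ℕ := Nat.card ↥(B₀ ∩ Δ₀) with hcdef
  -- constancy of block-part intersection sizes, via flag-transitivity
  have hconst : ∀ B ∈ Bs, ∀ Δ ∈ C, (B ∩ Δ).Nonempty → Nat.card ↥(B ∩ Δ) = c := by
    rintro B hB Δ hΔ ⟨β, hβB, hβΔ⟩
    obtain ⟨g, hgG, hgB, hgα⟩ := hft B₀ hB₀Bs B hB α₀ hα₀B₀ β hβB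
    have hgΔmem : (⇑g) '' Δ₀ ∈ C := hC.2 g hgG Δ₀ hΔ₀C
    have hβg : β ∈ (⇑g) '' Δ₀ := ⟨α₀, hα₀Δ₀, hgα⟩
    obtain ⟨Δ', _, hΔ'u⟩ := hC.1.2 β
    have hgΔ : (⇑g) '' Δ₀ = Δ := (hΔ'u _ ⟨hgΔmem, hβg⟩).trans (hΔ'u _ ⟨hΔ, hβΔ⟩).symm
    have himg : (⇑g) '' (B₀ ∩ Δ₀) = B ∩ Δ := by
      rw [Set.image_inter g.injective, hgB, hgΔ]
    rw [← himg, Nat.card_coe_set_eq, Set.ncard_image_of_injective _ g.injective,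
      ← Nat.card_coe_set_eq]
  have hck : c ≤ k := by
    rw [hcdef, ← hBk B₀ hB₀Bs, Nat.card_coe_set_eq, Nat.card_coe_set_eq]
    exact Set.ncard_le_ncard Set.inter_subset_left (Set.toFinite B₀)
  -- (3) counting pairs through α₀ inside its part : r * (c - 1) = (x - 1) * 2
  have hΔ₀card : Δ₀.toFinset.card = x := by
    have := hCx Δ₀ hΔ₀C
    rwa [Nat.card_coe_set_eq, Set.ncard_eq_toFinset_card'] at this
  have hcount3 : r * (c - 1) = (x - 1) * 2 := by
    have key := Finset.card_mul_eq_card_mul (fun (B : Set P) (p : P) => p ∈ B)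
        (s := tB.filter (fun B => α₀ ∈ B)) (t := Δ₀.toFinset.erase α₀) (m := c - 1) (n := 2)
        ?_ ?_
    · rwa [hrb α₀, Finset.card_erase_of_mem (by rw [Set.mem_toFinset]; exact hα₀Δ₀),
        hΔ₀card] at key
    · intro B hB
      rw [Finset.mem_filter] at hB
      have hBBs : B ∈ Bs := by rw [htBdef, Set.mem_toFinset] at hB; exact hB.1
      have hcB : Nat.card ↥(B ∩ Δ₀) = c := hconst B hBBs Δ₀ hΔ₀C ⟨α₀, hB.2, hα₀Δ₀⟩
      have hcB' : (B ∩ Δ₀).toFinset.card = c := by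
        rwa [Nat.card_coe_set_eq, Set.ncard_eq_toFinset_card'] at hcB
      rw [Finset.bipartiteAbove]
      have h1 : (Δ₀.toFinset.erase α₀).filter (fun p => p ∈ B)
          = (B ∩ Δ₀).toFinset.erase α₀ := by
        ext p
        simp only [Finset.mem_filter, Finset.mem_erase, Set.mem_toFinset, Set.mem_inter_iff]
        tauto
      rw [h1, Finset.card_erase_of_mem
        (by rw [Set.mem_toFinset]; exact ⟨hB.2, hα₀Δ₀⟩), hcB']
    · intro p hp
      rw [Finset.mem_erase] at hp
      rw [Finset.bipartiteBelow, Finset.filter_filter]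
      exact hpair α₀ p (Ne.symm hp.1)
  -- (4) counting : v = y * x
  have hCcard : C.toFinset.card = y := by
    rw [← hCy, Nat.card_coe_set_eq, Set.ncard_eq_toFinset_card']
  have hcount4 : y * x = v * 1 := by
    have key := Finset.card_mul_eq_card_mul (fun (Δ : Set P) (p : P) => p ∈ Δ)
        (s := C.toFinset) (t := Finset.univ) (m := x) (n := 1) ?_ ?_
    · rwa [hCcard, Finset.card_univ, hvF] at key
    · intro Δ hΔ
      rw [Set.mem_toFinset] at hΔ
      rw [Finset.bipartiteAbove]
      have := hCx Δ hΔ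
      rw [Nat.card_coe_set_eq, Set.ncard_eq_toFinset_card'] at this
      rw [← this]
      congr 1
      ext p; simp [Set.mem_toFinset]
    · intro p _
      rw [Finset.bipartiteBelow, Finset.card_eq_one]
      obtain ⟨Δp, ⟨hΔpC, hpΔp⟩, hΔpu⟩ := hC.1.2 p
      refine ⟨Δp, ?_⟩
      ext Δ
      simp only [Finset.mem_filter, Set.mem_toFinset, Finset.mem_singleton]
      constructor
      · rintro ⟨h1', h2'⟩; exact hΔpu Δ ⟨h1', h2'⟩
      · rintro rfl; exact ⟨hΔpC, hpΔp⟩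
  have hvyx : v = y * x := by rw [mul_one] at hcount4; exact hcount4.symm
  -- Fisher's inequality
  have hfisher : v ≤ b := fisher_aux P tB v b r ⟨α₀⟩ hvF htBcard hr3 hrb hpair
  -- arithmetic endgame
  obtain ⟨hvx, hyx, hkx, hrn, hbx, hc2, hdvd, heven, hx4, hmem⟩ :=
    arith_endgame v k b r x y c hk hkv hx1 hxv hflags hcount2 hcount3 hvyx hfisher hck
  exact ⟨hvx, hyx, hkx, hrn, hbx,
    fun B hB Δ hΔ hne' => (hconst B hB Δ hΔ hne').trans hc2,
    hdvd, heven, hx4, hmem⟩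
end

section
/- Let S = (P,L) be a nontrivial 2-(v,k,1) design (so 2 < k < v), and let ℬ = { ℓ∖{α} : ℓ ∈ L, α ∈ ℓ }. Then D(S) = (P,ℬ) is a 2-(v, k−1, k−2) design, its number of blocks equals k·|L|, and this number is strictly greater than v (so D(S) is non-symmetric). -/
lemma ncard_biUnion_const {α β : Type*} {s : Set α} (hs : s.Finite) (f : α → Set β) (c : ℕ)
    (hc : ∀ a ∈ s, (f a).ncard = c) (hfin : ∀ a ∈ s, (f a).Finite)
    (hdisj : ∀ a ∈ s, ∀ b ∈ s, a ≠ b → Disjoint (f a) (f b)) :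
    (⋃ a ∈ s, f a).ncard = c * s.ncard := by
  induction s, hs using Set.Finite.induction_on with
  | empty => simp
  | @insert a s ha hsf ih =>
    rw [Set.biUnion_insert]
    have hdis : Disjoint (f a) (⋃ b ∈ s, f b) := by
      rw [Set.disjoint_iUnion_right]
      intro b
      rw [Set.disjoint_iUnion_right]
      intro hb
      exact hdisj a (Set.mem_insert a s) b (Set.mem_insert_of_mem _ hb)
        (fun h => ha (h ▸ hb))
    have hfin2 : (⋃ b ∈ s, f b).Finite :=
      Set.Finite.biUnion hsf (fun b hb => hfin b (Set.mem_insert_of_mem _ hb))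
    rw [Set.ncard_union_eq hdis (hfin a (Set.mem_insert a s)) hfin2,
      ih (fun b hb => hc b (Set.mem_insert_of_mem _ hb))
        (fun b hb => hfin b (Set.mem_insert_of_mem _ hb))
        (fun b hb b' hb' hne => hdisj b (Set.mem_insert_of_mem _ hb) b'
          (Set.mem_insert_of_mem _ hb') hne),
      hc a (Set.mem_insert a s), Set.ncard_insert_of_notMem ha hsf]
    ring


/-- Construction 1.2: from a nontrivial `2`-`(v, k, 1)` design (linear space) `S = (P, L)`,
removing one point from each line yields a `2`-`(v, k-1, k-2)` design with `k · |L|`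
blocks, and this number of blocks exceeds `v` (the design is non-symmetric). -/
theorem construction_gives_design (v k : ℕ) (P : Type*) (L : Set (Set P))
    (hS : IsTwoDesign v k 1 P L) (hk : 2 < k) (hkv : k < v)
    (Bs : Set (Set P)) (hBs : Bs = {B : Set P | ∃ ℓ ∈ L, ∃ a ∈ ℓ, B = ℓ \ {a}}) :
    IsTwoDesign v (k - 1) (k - 2) P Bs ∧
    Nat.card Bs = k * Nat.card L ∧
    v < Nat.card Bs := by
  classical
  obtain ⟨hP, hL, hlam⟩ := hS
  have hPfin : Finite P := Nat.finite_of_card_ne_zero (by omega)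
  have hLfin : L.Finite := Set.toFinite L
  have hline : ∀ ℓ ∈ L, ℓ.ncard = k := fun ℓ h => by
    rw [← Nat.card_coe_set_eq]; exact hL ℓ h
  have hlfin : ∀ ℓ : Set P, ℓ.Finite := fun ℓ => Set.toFinite ℓ
  -- uniqueness and existence of lines through two points
  have huniq : ∀ x y : P, x ≠ y → ∀ ℓ ∈ L, ∀ ℓ' ∈ L,
      x ∈ ℓ → y ∈ ℓ → x ∈ ℓ' → y ∈ ℓ' → ℓ = ℓ' := by
    intro x y hxy ℓ hℓ ℓ' hℓ' hx hy hx' hy'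
    have h1 := hlam x y hxy
    rw [Nat.card_coe_set_eq, Set.ncard_eq_one] at h1
    obtain ⟨ℓ₀, h0⟩ := h1
    have hm : ℓ ∈ {B : Set P | B ∈ L ∧ x ∈ B ∧ y ∈ B} := ⟨hℓ, hx, hy⟩
    have hm' : ℓ' ∈ {B : Set P | B ∈ L ∧ x ∈ B ∧ y ∈ B} := ⟨hℓ', hx', hy'⟩
    rw [h0, Set.mem_singleton_iff] at hm hm'
    rw [hm, hm']
  have hexists : ∀ x y : P, x ≠ y → ∃ ℓ ∈ L, x ∈ ℓ ∧ y ∈ ℓ := by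
    intro x y hxy
    have h1 := hlam x y hxy
    rw [Nat.card_coe_set_eq, Set.ncard_eq_one] at h1
    obtain ⟨ℓ₀, h0⟩ := h1
    have : ℓ₀ ∈ {B : Set P | B ∈ L ∧ x ∈ B ∧ y ∈ B} := h0 ▸ rfl
    exact ⟨ℓ₀, this.1, this.2⟩
  -- injectivity of a ↦ ℓ \ {a} on ℓ
  have hinj : ∀ ℓ : Set P, Set.InjOn (fun a => ℓ \ {a}) ℓ := by
    intro ℓ a ha a' ha' h
    by_contra hne
    have h2 : ℓ \ {a} = ℓ \ {a'} := h
    have h1 : a' ∈ ℓ \ {a} := ⟨ha', fun h' => hne (Set.mem_singleton_iff.mp h').symm⟩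
    rw [h2] at h1
    exact h1.2 rfl
  -- any block contains two distinct points
  have htwo : ∀ ℓ ∈ L, ∀ a, ∃ x ∈ ℓ \ {a}, ∃ y ∈ ℓ \ {a}, x ≠ y := by
    intro ℓ hℓ a
    have hcard : 1 < (ℓ \ {a}).ncard := by
      by_cases h : a ∈ ℓ
      · rw [Set.ncard_diff_singleton_of_mem h]
        have := hline ℓ hℓ; omega
      · rw [Set.diff_singleton_eq_self h]
        have := hline ℓ hℓ; omega
    obtain ⟨x, y, hx, hy, hxy⟩ := (Set.one_lt_ncard_iff (hlfin _)).mp hcard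
    exact ⟨x, hx, y, hy, hxy⟩
  -- Bs as a biUnion
  have hBsU : Bs = ⋃ ℓ ∈ L, (fun a => ℓ \ {a}) '' ℓ := by
    rw [hBs]; ext B
    simp only [Set.mem_setOf_eq, Set.mem_iUnion, Set.mem_image]
    constructor
    · rintro ⟨ℓ, hℓ, a, ha, rfl⟩; exact ⟨ℓ, hℓ, a, ha, rfl⟩
    · rintro ⟨ℓ, hℓ, a, ha, rfl⟩; exact ⟨ℓ, hℓ, a, ha, rfl⟩
  have hdisjL : ∀ ℓ ∈ L, ∀ ℓ' ∈ L, ℓ ≠ ℓ' →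
      Disjoint ((fun a => ℓ \ {a}) '' ℓ) ((fun a => ℓ' \ {a}) '' ℓ') := by
    intro ℓ hℓ ℓ' hℓ' hne
    rw [Set.disjoint_left]
    rintro B ⟨a, ha, rfl⟩ ⟨a', ha', hB'⟩
    obtain ⟨x, hx, y, hy, hxy⟩ := htwo ℓ hℓ a
    have hB2 : ℓ \ {a} = ℓ' \ {a'} := hB'.symm
    have hx' : x ∈ ℓ' \ {a'} := hB2 ▸ hx
    have hy' : y ∈ ℓ' \ {a'} := hB2 ▸ hy
    exact hne (huniq x y hxy ℓ hℓ ℓ' hℓ' hx.1 hy.1 hx'.1 hy'.1)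
  have hcardBs : Nat.card Bs = k * Nat.card L := by
    rw [Nat.card_coe_set_eq, Nat.card_coe_set_eq, hBsU]
    exact ncard_biUnion_const hLfin _ k
      (fun ℓ hℓ => by rw [Set.ncard_image_of_injOn (hinj ℓ)]; exact hline ℓ hℓ)
      (fun ℓ hℓ => (hlfin ℓ).image _)
      hdisjL
  -- blocks have size k - 1
  have hBsize : ∀ B ∈ Bs, Nat.card B = k - 1 := by
    intro B hB
    rw [hBs] at hB
    obtain ⟨ℓ, hℓ, a, ha, rfl⟩ := hB
    rw [Nat.card_coe_set_eq, Set.ncard_diff_singleton_of_mem ha, hline ℓ hℓ]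
  -- lambda condition
  have hlam2 : ∀ x y : P, x ≠ y →
      Nat.card {B : Set P | B ∈ Bs ∧ x ∈ B ∧ y ∈ B} = k - 2 := by
    intro x y hxy
    obtain ⟨ℓ₀, hℓ₀, hx₀, hy₀⟩ := hexists x y hxy
    have hset : {B : Set P | B ∈ Bs ∧ x ∈ B ∧ y ∈ B}
        = (fun a => ℓ₀ \ {a}) '' (ℓ₀ \ {x, y}) := by
      ext B
      simp only [Set.mem_setOf_eq, Set.mem_image]
      constructor
      · rintro ⟨hB, hxB, hyB⟩
        rw [hBs] at hB
        obtain ⟨ℓ, hℓ, a, ha, rfl⟩ := hB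
        have hℓeq : ℓ = ℓ₀ :=
          huniq x y hxy ℓ hℓ ℓ₀ hℓ₀ hxB.1 hyB.1 hx₀ hy₀
        subst hℓeq
        refine ⟨a, ⟨ha, ?_⟩, rfl⟩
        intro hmem
        simp only [Set.mem_insert_iff, Set.mem_singleton_iff] at hmem
        rcases hmem with h | h
        · exact hxB.2 (by simp [h])
        · exact hyB.2 (by simp [h])
      · rintro ⟨a, ⟨ha, hax⟩, rfl⟩
        have hax' : a ≠ x := fun h => hax (by simp [h])
        have hay' : a ≠ y := fun h => hax (by simp [h])
        refine ⟨?_, ⟨hx₀, fun h => hax' ((Set.mem_singleton_iff.mp h).symm)⟩,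
          ⟨hy₀, fun h => hay' ((Set.mem_singleton_iff.mp h).symm)⟩⟩
        rw [hBs]
        exact ⟨ℓ₀, hℓ₀, a, ha, rfl⟩
    rw [Nat.card_coe_set_eq, hset,
      Set.ncard_image_of_injOn ((hinj ℓ₀).mono Set.diff_subset)]
    have hsplit : ℓ₀ \ {x, y} = (ℓ₀ \ {x}) \ {y} := by
      ext z; simp only [Set.mem_diff, Set.mem_insert_iff, Set.mem_singleton_iff]; tauto
    have hy₁ : y ∈ ℓ₀ \ {x} := ⟨hy₀, fun h => hxy ((Set.mem_singleton_iff.mp h).symm)⟩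
    rw [hsplit, Set.ncard_diff_singleton_of_mem hy₁,
      Set.ncard_diff_singleton_of_mem hx₀, hline ℓ₀ hℓ₀]
    omega
  -- counting lines through a fixed point
  have hvlt : v < k * Nat.card L := by
    have hne : Nonempty P := by
      rcases (Nat.card_ne_zero).mp (by omega : Nat.card P ≠ 0) with ⟨h, _⟩
      exact h
    obtain ⟨x⟩ := hne
    set Lx : Set (Set P) := {ℓ | ℓ ∈ L ∧ x ∈ ℓ} with hLx
    have hLxfin : Lx.Finite := Set.toFinite Lx
    have hpart : Set.univ \ {x} = ⋃ ℓ ∈ Lx, (ℓ \ {x}) := by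
      ext y
      simp only [Set.mem_diff, Set.mem_univ, true_and, Set.mem_singleton_iff,
        Set.mem_iUnion, hLx, Set.mem_setOf_eq]
      constructor
      · intro hyx
        obtain ⟨ℓ, hℓ, hxℓ, hyℓ⟩ := hexists x y (Ne.symm hyx)
        exact ⟨ℓ, ⟨hℓ, hxℓ⟩, hyℓ, hyx⟩
      · rintro ⟨ℓ, _, _, hyx⟩
        exact hyx
    have hcount : (Set.univ \ {x} : Set P).ncard = (k - 1) * Lx.ncard := by
      rw [hpart]
      refine ncard_biUnion_const hLxfin _ (k - 1) ?_ (fun ℓ _ => (hlfin ℓ).diff) ?_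
      · rintro ℓ ⟨hℓ, hxℓ⟩
        rw [Set.ncard_diff_singleton_of_mem hxℓ, hline ℓ hℓ]
      · rintro ℓ ⟨hℓ, hxℓ⟩ ℓ' ⟨hℓ', hxℓ'⟩ hne
        rw [Set.disjoint_left]
        rintro y ⟨hyℓ, hyx⟩ ⟨hyℓ', _⟩
        have hyx' : x ≠ y := fun h => hyx (by simp [← h])
        exact hne (huniq x y hyx' ℓ hℓ ℓ' hℓ' hxℓ hyℓ hxℓ' hyℓ')
    have hux : (Set.univ \ {x} : Set P).ncard = v - 1 := by
      rw [Set.ncard_diff_singleton_of_mem (Set.mem_univ x), Set.ncard_univ, hP]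
    have heq : (k - 1) * Lx.ncard = v - 1 := by rw [← hcount, hux]
    set r := Lx.ncard with hr
    have hr2 : 2 ≤ r := by
      by_contra h
      push_neg at h
      interval_cases r <;> omega
    have hrL : r ≤ Nat.card L := by
      rw [Nat.card_coe_set_eq]
      exact Set.ncard_le_ncard (fun ℓ hℓ => hℓ.1) hLfin
    set a := k - 1 with ha
    have hka : k = a + 1 := by omega
    calc v < (v - 1) + 2 := by omega
      _ ≤ a * r + r := by omega
      _ = (a + 1) * r := by ring
      _ = k * r := by rw [← hka]
      _ ≤ k * Nat.card L := Nat.mul_le_mul_left k hrL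
  exact ⟨⟨hP, hBsize, hlam2⟩, hcardBs, by rw [hcardBs]; exact hvlt⟩
end

section
/- Let S = (P,L) be a nontrivial 2-(v,k,1) design (so 2 < k < v), let ℬ = { ℓ∖{α} : ℓ ∈ L, α ∈ ℓ }, and let D(S) = (P,ℬ). If G ≤ Aut(S) is flag-transitive on S and for some line ℓ ∈ L the setwise stabilizer G_ℓ induces a 2-transitive permutation group on the points of ℓ, then G is a flag-transitive and point-primitive group of automorphisms of D(S). -/
/-- `G` is transitive on the points and preserves no nontrivial partition of the points:
every `G`-invariant partition has all parts singletons or is the one-part partition. -/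
def IsPointPrimitive {P : Type*} (G : Subgroup (Equiv.Perm P)) : Prop :=
  (∀ x y : P, ∃ g ∈ G, g x = y) ∧
  ∀ C : Set (Set P), IsInvariantPartition G C →
    (∀ Δ ∈ C, ∀ x ∈ Δ, ∀ y ∈ Δ, x = y) ∨ C = {Set.univ}

/-- If `G` is a flag-transitive group of automorphisms of a nontrivial
`2`-`(v, k, 1)` design `S = (P, L)` and for some line `ℓ` the setwise stabilizer
`G_ℓ` induces a `2`-transitive group on `ℓ`, then `G` is a flag-transitive and
point-primitive group of automorphisms of the design `D(S)` of Construction 1.2. -/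
theorem construction_flag_transitive (v k : ℕ) (P : Type*) (L : Set (Set P))
    (hS : IsTwoDesign v k 1 P L) (hk : 2 < k) (hkv : k < v)
    (Bs : Set (Set P)) (hBs : Bs = {B : Set P | ∃ ℓ ∈ L, ∃ a ∈ ℓ, B = ℓ \ {a}})
    (G : Subgroup (Equiv.Perm P)) (hGaut : IsAutomGroup G L)
    (hft : IsFlagTransitive G L)
    (ℓ : Set P) (hℓ : ℓ ∈ L)
    (h2t : ∀ a ∈ ℓ, ∀ b ∈ ℓ, ∀ c ∈ ℓ, ∀ d ∈ ℓ, a ≠ b → c ≠ d →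
      ∃ g ∈ G, (⇑g) '' ℓ = ℓ ∧ g a = c ∧ g b = d) :
    IsAutomGroup G Bs ∧ IsFlagTransitive G Bs ∧ IsPointPrimitive G := by
  obtain ⟨hv, hcard, hlam⟩ := hS
  -- unique line through two distinct points
  have hline : ∀ x y : P, x ≠ y → ∃ m, (m ∈ L ∧ x ∈ m ∧ y ∈ m) ∧
      ∀ m', m' ∈ L → x ∈ m' → y ∈ m' → m' = m := by
    intro x y hxy
    have h1 := hlam x y hxy
    rw [Nat.card_eq_one_iff_exists] at h1
    obtain ⟨⟨m, hm⟩, hu⟩ := h1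
    exact ⟨m, hm, fun m' h1 h2 h3 => congrArg Subtype.val (hu ⟨m', h1, h2, h3⟩)⟩
  -- every line has two distinct points
  have hnt : ∀ m ∈ L, ∃ p ∈ m, ∃ q ∈ m, p ≠ q := by
    intro m hm
    have hfin : Finite m := Nat.finite_of_card_ne_zero (by rw [hcard m hm]; omega)
    have : Nontrivial m :=
      Finite.one_lt_card_iff_nontrivial.mp (by rw [hcard m hm]; omega)
    obtain ⟨⟨p, hp⟩, ⟨q, hq⟩, hpq⟩ := this
    exact ⟨p, hp, q, hq, fun h => hpq (Subtype.ext h)⟩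
  -- two-point transitivity
  have h2pt : ∀ a b c d : P, a ≠ b → c ≠ d → ∃ g ∈ G, g a = c ∧ g b = d := by
    intro a b c d hab hcd
    obtain ⟨m₁, ⟨hm₁, ha, hb⟩, _⟩ := hline a b hab
    obtain ⟨m₂, ⟨hm₂, hc, hd⟩, _⟩ := hline c d hcd
    obtain ⟨p, hp, q, hq, hpq⟩ := hnt ℓ hℓ
    obtain ⟨g₁, hg₁G, hg₁ℓ, hg₁a⟩ := hft m₁ hm₁ ℓ hℓ a ha p hp
    obtain ⟨g₂, hg₂G, hg₂ℓ, hg₂c⟩ := hft m₂ hm₂ ℓ hℓ c hc p hp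
    have hga : g₁ a ∈ ℓ := hg₁ℓ ▸ Set.mem_image_of_mem _ ha
    have hgb : g₁ b ∈ ℓ := hg₁ℓ ▸ Set.mem_image_of_mem _ hb
    have hgc : g₂ c ∈ ℓ := hg₂ℓ ▸ Set.mem_image_of_mem _ hc
    have hgd : g₂ d ∈ ℓ := hg₂ℓ ▸ Set.mem_image_of_mem _ hd
    obtain ⟨h, hhG, hhℓ, hha, hhb⟩ :=
      h2t (g₁ a) hga (g₁ b) hgb (g₂ c) hgc (g₂ d) hgd
        (fun he => hab (g₁.injective he)) (fun he => hcd (g₂.injective he))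
    refine ⟨g₂⁻¹ * h * g₁, G.mul_mem (G.mul_mem (G.inv_mem hg₂G) hhG) hg₁G, ?_, ?_⟩
    · simp [Equiv.Perm.mul_apply, hha]
    · simp [Equiv.Perm.mul_apply, hhb]
  -- automorphism group of the new design
  have haut : IsAutomGroup G Bs := by
    intro g hg B hB
    rw [hBs] at hB ⊢
    obtain ⟨m, hm, a, ha, rfl⟩ := hB
    refine ⟨(⇑g) '' m, hGaut g hg m hm, g a, Set.mem_image_of_mem _ ha, ?_⟩
    rw [← Set.image_singleton, ← Set.image_diff g.injective]
  refine ⟨haut, ?_, ?_, ?_⟩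
  · -- flag transitivity for Bs
    intro B₁ hB₁ B₂ hB₂ x₁ hx₁ x₂ hx₂
    rw [hBs] at hB₁ hB₂
    obtain ⟨m₁, hm₁, a₁, ha₁, rfl⟩ := hB₁
    obtain ⟨m₂, hm₂, a₂, ha₂, rfl⟩ := hB₂
    obtain ⟨hx₁m, hx₁a⟩ := hx₁
    obtain ⟨hx₂m, hx₂a⟩ := hx₂
    have hax₁ : a₁ ≠ x₁ := fun h => hx₁a (by simp [h.symm])
    have hax₂ : a₂ ≠ x₂ := fun h => hx₂a (by simp [h.symm])
    obtain ⟨g, hgG, hga, hgx⟩ := h2pt a₁ x₁ a₂ x₂ hax₁ hax₂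
    obtain ⟨m, ⟨hmL, ham, hxm⟩, huniq⟩ := hline a₂ x₂ hax₂
    have h1 : (⇑g) '' m₁ = m :=
      huniq _ (hGaut g hgG m₁ hm₁) (hga ▸ Set.mem_image_of_mem _ ha₁)
        (hgx ▸ Set.mem_image_of_mem _ hx₁m)
    have h2 : m₂ = m := huniq _ hm₂ ha₂ hx₂m
    refine ⟨g, hgG, ?_, hgx⟩
    rw [Set.image_diff g.injective, Set.image_singleton, h1, h2, hga]
  · -- point transitivity
    intro x y
    by_cases h : x = y
    · exact ⟨1, G.one_mem, by simp [h]⟩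
    · obtain ⟨g, hgG, hgx, _⟩ := h2pt x y y x h (Ne.symm h)
      exact ⟨g, hgG, hgx⟩
  · -- primitivity
    rintro C ⟨⟨hne, hpart⟩, hinv⟩
    by_cases hs : ∀ Δ ∈ C, ∀ x ∈ Δ, ∀ y ∈ Δ, x = y
    · exact Or.inl hs
    right
    push_neg at hs
    obtain ⟨Δ, hΔ, x, hx, y, hy, hxy⟩ := hs
    have hΔuniv : Δ = Set.univ := by
      ext z
      simp only [Set.mem_univ, iff_true]
      by_cases hz : z = x
      · exact hz ▸ hx
      obtain ⟨g, hgG, hgx, hgy⟩ := h2pt x y x z hxy (Ne.symm hz)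
      have hgΔ : (⇑g) '' Δ ∈ C := hinv g hgG Δ hΔ
      obtain ⟨Δ', _, huniq⟩ := hpart x
      have e1 : Δ = Δ' := huniq Δ ⟨hΔ, hx⟩
      have e2 : (⇑g) '' Δ = Δ' :=
        huniq _ ⟨hgΔ, by rw [← hgx]; exact Set.mem_image_of_mem _ hx⟩
      have hz' : z ∈ (⇑g) '' Δ := by rw [← hgy]; exact Set.mem_image_of_mem _ hy
      rw [e2, ← e1] at hz'
      exact hz'
    ext Δ'
    simp only [Set.mem_singleton_iff]
    constructor
    · intro hΔ'
      obtain ⟨w, hw⟩ := hne Δ' hΔ'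
      obtain ⟨Δ'', _, huniq⟩ := hpart w
      rw [huniq Δ' ⟨hΔ', hw⟩, ← huniq Δ ⟨hΔ, hΔuniv ▸ Set.mem_univ w⟩]
      exact hΔuniv
    · intro h
      rw [h, ← hΔuniv]
      exact hΔ
end
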